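/- arXiv:2201.08756 — 10 statements merged into one kernel-verified Lean document; each statement's English description precedes it below -/
import Mathlib

section
/- Let y ∈ ℝⁿ, X an n×d real matrix, D a d×d positive semidefinite real matrix, and V an n×n positive semidefinite real matrix, and set N = X D Xᵀ + V. Then the constraint set Θ(D,V) = {β ∈ ℝᵈ : y − Xβ ∈ range(V) and β ∈ range(D)} is nonempty if and only if y ∈ range(N). -/
open Matrix
open scoped MatrixOrder

/-- For a real matrix `A`, `range ((A * Aᵀ).mulVec) = range (A.mulVec)`. -/
lemma range_mul_transpose_mulVecLin {m k : Type*} [Fintype m] [Fintype k] [DecidableEq m]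
    (A : Matrix m k ℝ) :
    LinearMap.range (A * Aᵀ).mulVecLin = LinearMap.range A.mulVecLin := by
  apply Submodule.eq_of_le_of_finrank_eq
  · rw [Matrix.mulVecLin_mul]
    exact LinearMap.range_comp_le_range _ _
  · exact A.rank_self_mul_transpose

/-- The constraint set `Θ(D,V) = {β : y − Xβ ∈ range(V), β ∈ range(D)}` is nonempty
iff `y ∈ range(X D Xᵀ + V)`. -/
theorem stmt0 {n d : ℕ} (y : Fin n → ℝ) (X : Matrix (Fin n) (Fin d) ℝ)
    (D : Matrix (Fin d) (Fin d) ℝ) (V : Matrix (Fin n) (Fin n) ℝ)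
    (hD : D.PosSemidef) (hV : V.PosSemidef) :
    {β : Fin d → ℝ |
        y - X.mulVec β ∈ Set.range V.mulVec ∧ β ∈ Set.range D.mulVec}.Nonempty ↔
      y ∈ Set.range (X * D * Xᵀ + V).mulVec := by
  set S := CFC.sqrt D with hS
  set T := CFC.sqrt V with hT
  have hSsym : Sᵀ = S := by
    have := (CFC.sqrt_nonneg D).posSemidef.isHermitian
    simpa [Matrix.IsHermitian] using this
  have hTsym : Tᵀ = T := by
    have := (CFC.sqrt_nonneg V).posSemidef.isHermitian
    simpa [Matrix.IsHermitian] using this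
  have hSS : S * S = D := CFC.sqrt_mul_sqrt_self D hD.nonneg
  have hTT : T * T = V := CFC.sqrt_mul_sqrt_self V hV.nonneg
  set M : Matrix (Fin n) (Fin d ⊕ Fin n) ℝ := fromCols (X * S) T with hM
  have hMM : M * Mᵀ = X * D * Xᵀ + V := by
    rw [hM, transpose_fromCols, fromCols_mul_fromRows, transpose_mul, hSsym, hTsym,
      hTT]
    congr 1
    rw [show X * S * (S * Xᵀ) = X * (S * S) * Xᵀ by simp only [Matrix.mul_assoc], hSS]
  constructor
  · rintro ⟨β, ⟨w, hw⟩, ⟨γ, hγ⟩⟩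
    have hrange : Set.range (X * D * Xᵀ + V).mulVec = Set.range M.mulVec := by
      rw [← hMM]
      exact congrArg (SetLike.coe) (range_mul_transpose_mulVecLin M)
    rw [hrange]
    refine ⟨Sum.elim (S *ᵥ γ) (T *ᵥ w), ?_⟩
    have fromCols_mulVec_sum_elim' : ∀ (A : Matrix (Fin n) (Fin d) ℝ) (B : Matrix (Fin n) (Fin n) ℝ)
        (u : Fin d → ℝ) (v : Fin n → ℝ), fromCols A B *ᵥ Sum.elim u v = A *ᵥ u + B *ᵥ v := by
      intro A B u v
      ext i
      simp [mulVec, dotProduct, fromCols, Fintype.sum_sum_type]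
    rw [hM, fromCols_mulVec_sum_elim']
    have h1 : (X * S) *ᵥ (S *ᵥ γ) = X *ᵥ β := by
      rw [mulVec_mulVec, ← hγ, ← mulVec_mulVec, ← mulVec_mulVec, ← hSS, ← mulVec_mulVec]
    have h2 : T *ᵥ (T *ᵥ w) = V *ᵥ w := by
      rw [mulVec_mulVec, hTT]
    rw [h1, h2, hw]
    abel
  · rintro ⟨z, hz⟩
    refine ⟨D *ᵥ (Xᵀ *ᵥ z), ⟨z, ?_⟩, ⟨Xᵀ *ᵥ z, rfl⟩⟩
    rw [← hz, add_mulVec, mulVec_mulVec, mulVec_mulVec]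
    abel
end

section
/- Let y ∈ ℝⁿ, X an n×d real matrix, D a d×d positive semidefinite real matrix, V an n×n positive semidefinite real matrix, and N = X D Xᵀ + V. If y ∈ range(N), then β̂ = D Xᵀ N† y belongs to Θ(D,V) = {β : y − Xβ ∈ range(V), β ∈ range(D)} and is the unique minimizer over Θ(D,V) of the function β ↦ (y − Xβ)ᵀ V† (y − Xβ) + βᵀ D† β. -/
open Matrix

/-- The four Penrose conditions: `B` is the Moore–Penrose pseudoinverse of `A`. -/
def IsMoorePenrose {m n : Type*} [Fintype m] [Fintype n]
    (A : Matrix m n ℝ) (B : Matrix n m ℝ) : Prop :=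
  A * B * A = A ∧ B * A * B = B ∧ (A * B)ᵀ = A * B ∧ (B * A)ᵀ = B * A

lemma dp_shift {m n : ℕ} (A : Matrix (Fin m) (Fin n) ℝ) (a : Fin n → ℝ) (b : Fin m → ℝ) :
    A.mulVec a ⬝ᵥ b = a ⬝ᵥ Aᵀ.mulVec b := by
  rw [dotProduct_comm, dotProduct_mulVec, ← mulVec_transpose, dotProduct_comm]

lemma quad_pinv {m : ℕ} (A Ad : Matrix (Fin m) (Fin m) ℝ) (hsym : Aᵀ = A)
    (h : A * Ad * A = A) (t : Fin m → ℝ) :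
    (A.mulVec t) ⬝ᵥ Ad.mulVec (A.mulVec t) = t ⬝ᵥ A.mulVec t := by
  rw [mulVec_mulVec, dp_shift, mulVec_mulVec, ← Matrix.mul_assoc, hsym, h]

lemma psd_nonneg {m : ℕ} {A : Matrix (Fin m) (Fin m) ℝ} (hA : A.PosSemidef)
    (t : Fin m → ℝ) : 0 ≤ t ⬝ᵥ A.mulVec t := by
  simpa using hA.dotProduct_mulVec_nonneg t

lemma psd_zero {m : ℕ} {A : Matrix (Fin m) (Fin m) ℝ} (hA : A.PosSemidef)
    (t : Fin m → ℝ) (h : t ⬝ᵥ A.mulVec t = 0) : A.mulVec t = 0 := by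
  refine (hA.dotProduct_mulVec_zero_iff t).mp ?_
  simpa using h

/-- If `y ∈ range(N)` where `N = X D Xᵀ + V`, then `β̂ = D Xᵀ N† y` belongs to
`Θ(D,V)` and is the unique minimizer over `Θ(D,V)` of
`β ↦ (y − Xβ)ᵀ V† (y − Xβ) + βᵀ D† β`. -/
theorem stmt1 {n d : ℕ} (y : Fin n → ℝ) (X : Matrix (Fin n) (Fin d) ℝ)
    (D : Matrix (Fin d) (Fin d) ℝ) (V : Matrix (Fin n) (Fin n) ℝ)
    (hD : D.PosSemidef) (hV : V.PosSemidef)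
    (Dd : Matrix (Fin d) (Fin d) ℝ) (hDd : IsMoorePenrose D Dd)
    (Vd : Matrix (Fin n) (Fin n) ℝ) (hVd : IsMoorePenrose V Vd)
    (Nd : Matrix (Fin n) (Fin n) ℝ) (hNd : IsMoorePenrose (X * D * Xᵀ + V) Nd)
    (hy : y ∈ Set.range (X * D * Xᵀ + V).mulVec) :
    (D * Xᵀ * Nd).mulVec y ∈
      {β : Fin d → ℝ | y - X.mulVec β ∈ Set.range V.mulVec ∧ β ∈ Set.range D.mulVec} ∧
    (∀ β ∈ {β : Fin d → ℝ |
        y - X.mulVec β ∈ Set.range V.mulVec ∧ β ∈ Set.range D.mulVec},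
      (y - X.mulVec ((D * Xᵀ * Nd).mulVec y)) ⬝ᵥ
          Vd.mulVec (y - X.mulVec ((D * Xᵀ * Nd).mulVec y)) +
        ((D * Xᵀ * Nd).mulVec y) ⬝ᵥ Dd.mulVec ((D * Xᵀ * Nd).mulVec y) ≤
      (y - X.mulVec β) ⬝ᵥ Vd.mulVec (y - X.mulVec β) + β ⬝ᵥ Dd.mulVec β) ∧
    (∀ β ∈ {β : Fin d → ℝ |
        y - X.mulVec β ∈ Set.range V.mulVec ∧ β ∈ Set.range D.mulVec},
      (y - X.mulVec β) ⬝ᵥ Vd.mulVec (y - X.mulVec β) + β ⬝ᵥ Dd.mulVec β =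
        (y - X.mulVec ((D * Xᵀ * Nd).mulVec y)) ⬝ᵥ
            Vd.mulVec (y - X.mulVec ((D * Xᵀ * Nd).mulVec y)) +
          ((D * Xᵀ * Nd).mulVec y) ⬝ᵥ Dd.mulVec ((D * Xᵀ * Nd).mulVec y) →
        β = (D * Xᵀ * Nd).mulVec y) := by
  obtain ⟨z, hz⟩ := hy
  set N : Matrix (Fin n) (Fin n) ℝ := X * D * Xᵀ + V with hN
  set w : Fin n → ℝ := Nd.mulVec y with hw
  have hDsym : Dᵀ = D := hD.1
  have hVsym : Vᵀ = V := hV.1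
  -- y = N w
  have hyw : N.mulVec w = y := by
    rw [hw, ← hz, mulVec_mulVec, mulVec_mulVec, hNd.1]
  -- β̂ = D (Xᵀ w)
  have hbh : (D * Xᵀ * Nd).mulVec y = D.mulVec (Xᵀ.mulVec w) := by
    rw [hw, mulVec_mulVec, mulVec_mulVec, Matrix.mul_assoc]
  -- residual of β̂ is V w
  have hres : y - X.mulVec ((D * Xᵀ * Nd).mulVec y) = V.mulVec w := by
    rw [hbh, mulVec_mulVec, mulVec_mulVec, ← hyw, hN, add_mulVec, mulVec_mulVec,
      Matrix.mul_assoc]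
    abel
  refine ⟨⟨⟨w, hres.symm⟩, ⟨Xᵀ.mulVec w, hbh.symm⟩⟩, ?_, ?_⟩ <;>
  · rintro β ⟨⟨v, hv⟩, ⟨u, hu⟩⟩
    -- Q(β) in terms of v, u
    have hQβ : (y - X.mulVec β) ⬝ᵥ Vd.mulVec (y - X.mulVec β) + β ⬝ᵥ Dd.mulVec β
        = v ⬝ᵥ V.mulVec v + u ⬝ᵥ D.mulVec u := by
      rw [← hv, ← hu, quad_pinv V Vd hVsym hVd.1, quad_pinv D Dd hDsym hDd.1]
    -- Q(β̂) in terms of w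
    have hQh : (y - X.mulVec ((D * Xᵀ * Nd).mulVec y)) ⬝ᵥ
          Vd.mulVec (y - X.mulVec ((D * Xᵀ * Nd).mulVec y)) +
        ((D * Xᵀ * Nd).mulVec y) ⬝ᵥ Dd.mulVec ((D * Xᵀ * Nd).mulVec y)
        = w ⬝ᵥ V.mulVec w + (Xᵀ.mulVec w) ⬝ᵥ D.mulVec (Xᵀ.mulVec w) := by
      rw [hres, hbh, quad_pinv V Vd hVsym hVd.1, quad_pinv D Dd hDsym hDd.1]
    -- symmetry facts
    have e1 : v ⬝ᵥ V.mulVec w = w ⬝ᵥ V.mulVec v := by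
      rw [← hVsym, ← dp_shift, dotProduct_comm, hVsym]
    have e2 : u ⬝ᵥ D.mulVec (Xᵀ.mulVec w) = (Xᵀ.mulVec w) ⬝ᵥ D.mulVec u := by
      rw [← hDsym, ← dp_shift, dotProduct_comm, hDsym]
    -- key cross identity
    have e3 : w ⬝ᵥ V.mulVec v + (Xᵀ.mulVec w) ⬝ᵥ D.mulVec u
        = w ⬝ᵥ V.mulVec w + (Xᵀ.mulVec w) ⬝ᵥ D.mulVec (Xᵀ.mulVec w) := by
      have h1 : (Xᵀ.mulVec w) ⬝ᵥ D.mulVec u = w ⬝ᵥ X.mulVec (D.mulVec u) := by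
        rw [dp_shift, transpose_transpose]
      have h2 : (Xᵀ.mulVec w) ⬝ᵥ D.mulVec (Xᵀ.mulVec w)
          = w ⬝ᵥ X.mulVec (D.mulVec (Xᵀ.mulVec w)) := by
        rw [dp_shift, transpose_transpose]
      have hy2 : X.mulVec (D.mulVec u) + V.mulVec v
          = X.mulVec (D.mulVec (Xᵀ.mulVec w)) + V.mulVec w := by
        have h3 : X.mulVec (D.mulVec u) + V.mulVec v = y := by
          rw [← hu] at hv; rw [hv, hu]; abel
        have h5 : (X * D * Xᵀ).mulVec w = X.mulVec (D.mulVec (Xᵀ.mulVec w)) := by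
          rw [← mulVec_mulVec, ← mulVec_mulVec]
        have h4 : X.mulVec (D.mulVec (Xᵀ.mulVec w)) + V.mulVec w = y := by
          rw [← h5, ← add_mulVec, ← hN, hyw]
        rw [h3, h4]
      have := congrArg (fun t => w ⬝ᵥ t) hy2
      simp only [dotProduct_add] at this
      rw [h1, h2]
      linarith
    -- decomposition:  Q(β) - Q(β̂) = q1 + q2
    have q1e : (v - w) ⬝ᵥ V.mulVec (v - w)
        = v ⬝ᵥ V.mulVec v - v ⬝ᵥ V.mulVec w - w ⬝ᵥ V.mulVec v + w ⬝ᵥ V.mulVec w := by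
      simp only [mulVec_sub, dotProduct_sub, sub_dotProduct]
      ring
    have q2e : (u - Xᵀ.mulVec w) ⬝ᵥ D.mulVec (u - Xᵀ.mulVec w)
        = u ⬝ᵥ D.mulVec u - u ⬝ᵥ D.mulVec (Xᵀ.mulVec w) - (Xᵀ.mulVec w) ⬝ᵥ D.mulVec u
          + (Xᵀ.mulVec w) ⬝ᵥ D.mulVec (Xᵀ.mulVec w) := by
      simp only [mulVec_sub, dotProduct_sub, sub_dotProduct]
      ring
    have key : v ⬝ᵥ V.mulVec v + u ⬝ᵥ D.mulVec u
        = (w ⬝ᵥ V.mulVec w + (Xᵀ.mulVec w) ⬝ᵥ D.mulVec (Xᵀ.mulVec w))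
          + ((v - w) ⬝ᵥ V.mulVec (v - w)
            + (u - Xᵀ.mulVec w) ⬝ᵥ D.mulVec (u - Xᵀ.mulVec w)) := by
      rw [q1e, q2e]
      linarith [e1, e2, e3]
    have q1nn := psd_nonneg hV (v - w)
    have q2nn := psd_nonneg hD (u - Xᵀ.mulVec w)
    first
    | -- inequality goal
      (rw [hQβ, hQh]; linarith)
    | -- uniqueness goal
      (intro heq
       rw [hQβ, hQh] at heq
       have hq2 : (u - Xᵀ.mulVec w) ⬝ᵥ D.mulVec (u - Xᵀ.mulVec w) = 0 := by linarith
       have hz2 : D.mulVec (u - Xᵀ.mulVec w) = 0 := psd_zero hD _ hq2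
       rw [mulVec_sub, sub_eq_zero] at hz2
       rw [← hu, hbh, hz2])
end

section
/- Let y ∈ ℝⁿ, X an n×d real matrix and V an n×n positive semidefinite real matrix. Then the set {β ∈ ℝᵈ : y − Xβ ∈ range(V)} is nonempty if and only if y ∈ range(X Xᵀ + V). -/
open Matrix

private lemma range_transpose_mul_self {m p : Type*} [Fintype m] [Fintype p]
    (A : Matrix m p ℝ) :
    Set.range (Aᵀ * A).mulVec = Set.range Aᵀ.mulVec := by
  have hsub : LinearMap.range (Aᵀ * A).mulVecLin = LinearMap.range Aᵀ.mulVecLin := by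
    apply Submodule.eq_of_le_of_finrank_le
    · rintro _ ⟨v, rfl⟩
      exact ⟨A.mulVec v, by simp [Matrix.mulVecLin_apply, Matrix.mulVec_mulVec]⟩
    · show Aᵀ.rank ≤ (Aᵀ * A).rank
      rw [Matrix.rank_transpose, Matrix.rank_transpose_mul_self]
  have h1 : Set.range (Aᵀ * A).mulVec = (LinearMap.range (Aᵀ * A).mulVecLin : Set (p → ℝ)) := by
    rw [LinearMap.coe_range]; rfl
  have h2 : Set.range Aᵀ.mulVec = (LinearMap.range Aᵀ.mulVecLin : Set (p → ℝ)) := by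
    rw [LinearMap.coe_range]; rfl
  rw [h1, h2, hsub]

/-- The set `{β : y − Xβ ∈ range(V)}` is nonempty iff `y ∈ range(X Xᵀ + V)`. -/
theorem stmt5 {n d : ℕ} (y : Fin n → ℝ) (X : Matrix (Fin n) (Fin d) ℝ)
    (V : Matrix (Fin n) (Fin n) ℝ) (hV : V.PosSemidef) :
    {β : Fin d → ℝ | y - X.mulVec β ∈ Set.range V.mulVec}.Nonempty ↔
      y ∈ Set.range (X * Xᵀ + V).mulVec := by
  obtain ⟨B, hB⟩ : ∃ B : Matrix (Fin n) (Fin n) ℝ, V = Bᴴ * B := by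
    open scoped MatrixOrder in
    obtain ⟨S, hS, -, hSV⟩ := CFC.exists_sqrt_of_isSelfAdjoint_of_quasispectrumRestricts hV.isHermitian
      (QuasispectrumRestricts.nnreal_of_nonneg (Matrix.nonneg_iff_posSemidef.mpr hV))
    exact ⟨S, by rw [← hSV]; exact congrArg (· * S) hS.star_eq.symm⟩
  rw [Matrix.conjTranspose_eq_transpose_of_trivial] at hB
  set C : Matrix (Fin n) (Fin d ⊕ Fin n) ℝ := Matrix.fromCols X Bᵀ with hC
  have hCCt : C * Cᵀ = X * Xᵀ + V := by
    rw [hC, Matrix.transpose_fromCols, Matrix.fromCols_mul_fromRows,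
      Matrix.transpose_transpose, hB]
  have hrange : Set.range (X * Xᵀ + V).mulVec = Set.range C.mulVec := by
    rw [← hCCt]
    have := range_transpose_mul_self Cᵀ
    rwa [Matrix.transpose_transpose] at this
  constructor
  · rintro ⟨β, w, hw⟩
    rw [hrange]
    refine ⟨Sum.elim β (B.mulVec w), ?_⟩
    rw [hC, Matrix.fromCols_mulVec_sumElim, Matrix.mulVec_mulVec, ← hB, hw]
    abel
  · rintro ⟨z, rfl⟩
    refine ⟨Xᵀ.mulVec z, z, ?_⟩
    rw [Matrix.add_mulVec, ← Matrix.mulVec_mulVec]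
    abel
end

section
/- Let y ∈ ℝⁿ, X an n×d real matrix and V an n×n positive semidefinite real matrix with y ∈ range(X Xᵀ + V). Set M = I − X X† and β̂ = X† (I − V M (M V M)† M) y. Then y − X β̂ ∈ range(V), and β̂ minimizes (y − Xβ)ᵀ V† (y − Xβ) over all β ∈ ℝᵈ with y − Xβ ∈ range(V). If moreover X has full column rank (rank d), then β̂ is the unique such minimizer. -/
open Matrix

section Aux

variable {m k : Type*} [Fintype m] [Fintype k]

/-- Uniqueness of the Moore–Penrose pseudoinverse. -/
lemma mp_unique {A : Matrix m k ℝ} {B C : Matrix k m ℝ}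
    (hB : IsMoorePenrose A B) (hC : IsMoorePenrose A C) : B = C := by
  obtain ⟨hB1, hB2, hB3, hB4⟩ := hB
  obtain ⟨hC1, hC2, hC3, hC4⟩ := hC
  have hAB : A * B = A * C := by
    calc A * B = A * C * A * B := by rw [hC1]
    _ = (A * C) * (A * B) := by simp only [Matrix.mul_assoc]
    _ = (A * C)ᵀ * (A * B)ᵀ := by rw [hC3, hB3]
    _ = ((A * B) * (A * C))ᵀ := by rw [← transpose_mul]
    _ = ((A * B * A) * C)ᵀ := by simp only [Matrix.mul_assoc]
    _ = (A * C)ᵀ := by rw [hB1]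
    _ = A * C := hC3
  have hBA : B * A = C * A := by
    calc B * A = B * (A * C * A) := by conv_lhs => rw [← hC1]
    _ = (B * A) * (C * A) := by simp only [Matrix.mul_assoc]
    _ = (B * A)ᵀ * (C * A)ᵀ := by rw [hB4, hC4]
    _ = ((C * A) * (B * A))ᵀ := by rw [← transpose_mul]
    _ = (C * (A * B * A))ᵀ := by simp only [Matrix.mul_assoc]
    _ = (C * A)ᵀ := by rw [hB1]
    _ = C * A := hC4
  calc B = B * A * B := hB2.symm
  _ = C * A * B := by rw [hBA]
  _ = C * (A * B) := by rw [Matrix.mul_assoc]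
  _ = C * (A * C) := by rw [hAB]
  _ = C * A * C := by rw [← Matrix.mul_assoc]
  _ = C := hC2

lemma mp_transpose {A : Matrix m k ℝ} {B : Matrix k m ℝ}
    (h : IsMoorePenrose A B) : IsMoorePenrose Aᵀ Bᵀ := by
  obtain ⟨h1, h2, h3, h4⟩ := h
  refine ⟨?_, ?_, ?_, ?_⟩
  · calc Aᵀ * Bᵀ * Aᵀ = (A * (B * A))ᵀ := by simp only [transpose_mul, Matrix.mul_assoc]
    _ = Aᵀ := by rw [← Matrix.mul_assoc, h1]
  · calc Bᵀ * Aᵀ * Bᵀ = (B * (A * B))ᵀ := by simp only [transpose_mul, Matrix.mul_assoc]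
    _ = Bᵀ := by rw [← Matrix.mul_assoc, h2]
  · calc (Aᵀ * Bᵀ)ᵀ = (B * A)ᵀᵀ := by rw [← transpose_mul]
    _ = B * A := transpose_transpose _
    _ = (B * A)ᵀ := h4.symm
    _ = Aᵀ * Bᵀ := by rw [transpose_mul]
  · calc (Bᵀ * Aᵀ)ᵀ = (A * B)ᵀᵀ := by rw [← transpose_mul]
    _ = A * B := transpose_transpose _
    _ = (A * B)ᵀ := h3.symm
    _ = Bᵀ * Aᵀ := by rw [transpose_mul]

/-- The pseudoinverse of a symmetric matrix is symmetric. -/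
lemma mp_symm {A B : Matrix m m ℝ} (hA : Aᵀ = A)
    (h : IsMoorePenrose A B) : Bᵀ = B := by
  have h' : IsMoorePenrose A Bᵀ := by
    have := mp_transpose h
    rwa [hA] at this
  exact mp_unique h' h

/-- PSD cancellation: `B V Bᵀ = 0` implies `B V = 0`. -/
lemma psd_cancel {A : Matrix m m ℝ} [DecidableEq m] (hA : A.PosSemidef) {B : Matrix m m ℝ}
    (h : B * A * Bᵀ = 0) : B * A = 0 := by
  open scoped MatrixOrder in
  have hCC : CFC.sqrt A * CFC.sqrt A = A := CFC.sqrt_mul_sqrt_self A hA.nonneg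
  open scoped MatrixOrder in
  set C := CFC.sqrt A with hCdef
  open scoped MatrixOrder in
  have hCt : Cᵀ = C := (CFC.sqrt_nonneg A).posSemidef.1
  have h0 : (B * C) * (B * C)ᵀ = 0 := by
    calc (B * C) * (B * C)ᵀ = (B * C) * (Cᵀ * Bᵀ) := by rw [transpose_mul]
    _ = (B * C) * (C * Bᵀ) := by rw [hCt]
    _ = B * (C * C) * Bᵀ := by simp only [Matrix.mul_assoc]
    _ = B * A * Bᵀ := by rw [hCC]
    _ = 0 := h
  have hBC : B * C = 0 := by
    have h0' : (B * C) * (B * C)ᴴ = 0 := h0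
    exact Matrix.self_mul_conjTranspose_eq_zero.mp h0'
  calc B * A = B * (C * C) := by rw [hCC]
  _ = (B * C) * C := by rw [Matrix.mul_assoc]
  _ = 0 := by rw [hBC, Matrix.zero_mul]

/-- Transfer a dot product through matrix-vector products. -/
lemma dp_helper {A B : Matrix m m ℝ} (x x' : m → ℝ) :
    x ⬝ᵥ ((Aᵀ * B).mulVec x') = (A.mulVec x) ⬝ᵥ (B.mulVec x') := by
  rw [← mulVec_mulVec, dotProduct_mulVec, vecMul_transpose]

lemma rank_inj {n d : ℕ} {X : Matrix (Fin n) (Fin d) ℝ} (h : X.rank = d) :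
    Function.Injective X.mulVec := by
  have h1 := LinearMap.finrank_range_add_finrank_ker X.mulVecLin
  have h2 : Module.finrank ℝ (Fin d → ℝ) = d := by simp
  have h3 : X.rank = Module.finrank ℝ (LinearMap.range X.mulVecLin) := rfl
  have hker : Module.finrank ℝ (LinearMap.ker X.mulVecLin) = 0 := by
    rw [h2] at h1
    rw [h3] at h
    omega
  have hbot : LinearMap.ker X.mulVecLin = ⊥ := Submodule.finrank_eq_zero.mp hker
  have hinj : Function.Injective X.mulVecLin := LinearMap.ker_eq_bot.mp hbot
  intro a b hab
  exact hinj (by simpa using hab)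

end Aux

/-- With `M = I − X X†` and `β̂ = X† (I − V M (M V M)† M) y`, where
`y ∈ range(X Xᵀ + V)`: the residual `y − X β̂` lies in `range(V)`, `β̂` minimizes
`(y − Xβ)ᵀ V† (y − Xβ)` over all `β` with `y − Xβ ∈ range(V)`, and if `X` has full
column rank then `β̂` is the unique such minimizer. -/
theorem stmt6 {n d : ℕ} (y : Fin n → ℝ) (X : Matrix (Fin n) (Fin d) ℝ)
    (V : Matrix (Fin n) (Fin n) ℝ) (hV : V.PosSemidef)
    (hy : y ∈ Set.range (X * Xᵀ + V).mulVec)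
    (Vd : Matrix (Fin n) (Fin n) ℝ) (hVd : IsMoorePenrose V Vd)
    (Xd : Matrix (Fin d) (Fin n) ℝ) (hXd : IsMoorePenrose X Xd)
    (Q : Matrix (Fin n) (Fin n) ℝ)
    (hQ : IsMoorePenrose ((1 - X * Xd) * V * (1 - X * Xd)) Q) :
    y - X.mulVec ((Xd * (1 - V * (1 - X * Xd) * Q * (1 - X * Xd))).mulVec y) ∈
        Set.range V.mulVec ∧
      (∀ β : Fin d → ℝ, y - X.mulVec β ∈ Set.range V.mulVec →
        (y - X.mulVec ((Xd * (1 - V * (1 - X * Xd) * Q * (1 - X * Xd))).mulVec y)) ⬝ᵥ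
            Vd.mulVec
              (y - X.mulVec
                ((Xd * (1 - V * (1 - X * Xd) * Q * (1 - X * Xd))).mulVec y)) ≤
          (y - X.mulVec β) ⬝ᵥ Vd.mulVec (y - X.mulVec β)) ∧
      (X.rank = d →
        ∀ β : Fin d → ℝ, y - X.mulVec β ∈ Set.range V.mulVec →
          (y - X.mulVec β) ⬝ᵥ Vd.mulVec (y - X.mulVec β) =
            (y - X.mulVec
                ((Xd * (1 - V * (1 - X * Xd) * Q * (1 - X * Xd))).mulVec y)) ⬝ᵥ
              Vd.mulVec
                (y - X.mulVec
                  ((Xd * (1 - V * (1 - X * Xd) * Q * (1 - X * Xd))).mulVec y)) →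
            β = (Xd * (1 - V * (1 - X * Xd) * Q * (1 - X * Xd))).mulVec y) := by
  obtain ⟨z, hz⟩ := hy
  set M : Matrix (Fin n) (Fin n) ℝ := 1 - X * Xd with hM
  set W : Matrix (Fin n) (Fin n) ℝ := M * V * M with hW
  clear_value M W
  -- basic facts about M
  have hMt : Mᵀ = M := by rw [hM, transpose_sub, transpose_one, hXd.2.2.1]
  have hPP : (X * Xd) * (X * Xd) = X * Xd := by
    rw [← Matrix.mul_assoc, hXd.1]
  have hMM : M * M = M := by
    rw [hM]
    have e : (1 - X * Xd) * (1 - X * Xd)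
        = 1 - X * Xd - X * Xd + (X * Xd) * (X * Xd) := by noncomm_ring
    rw [e, hPP]; abel
  have hMX : M * X = 0 := by
    rw [hM, Matrix.sub_mul, Matrix.one_mul, hXd.1, sub_self]
  -- symmetry facts
  have hVt : Vᵀ = V := hV.1
  have hVdt : Vdᵀ = Vd := mp_symm hVt hVd
  have hWt : Wᵀ = W := by
    rw [hW]; simp only [transpose_mul, hMt, hVt, Matrix.mul_assoc]
  have hQt : Qᵀ = Q := mp_symm hWt hQ
  obtain ⟨hQ1, hQ2, hQ3, hQ4⟩ := hQ
  -- Q absorbs M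
  have hWM : W * M = W := by
    rw [hW, Matrix.mul_assoc, hMM]
  have hQQ : Q = Q * Q * W := by
    calc Q = Q * W * Q := hQ2.symm
    _ = Q * (W * Q) := by rw [Matrix.mul_assoc]
    _ = Q * (W * Q)ᵀ := by rw [hQ3]
    _ = Q * (Qᵀ * Wᵀ) := by rw [transpose_mul]
    _ = Q * (Q * W) := by rw [hQt, hWt]
    _ = Q * Q * W := by rw [← Matrix.mul_assoc]
  have hQM : Q * M = Q := by
    conv_lhs => rw [hQQ]
    rw [Matrix.mul_assoc (Q * Q), hWM, ← hQQ]
  have hMQ : M * Q = Q := by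
    calc M * Q = Mᵀ * Qᵀ := by rw [hMt, hQt]
    _ = (Q * M)ᵀ := by rw [transpose_mul]
    _ = Qᵀ := by rw [hQM]
    _ = Q := hQt
  have hMQM : M * Q * M = Q := by rw [hMQ, hQM]
  have hQVQ : Q * V * Q = Q := by
    calc Q * V * Q = (Q * M) * V * (M * Q) := by rw [hQM, hMQ]
    _ = Q * (M * V * M) * Q := by simp only [Matrix.mul_assoc]
    _ = Q * W * Q := by rw [hW]
    _ = Q := hQ2
  have hMVQ : M * V * Q = W * Q := by
    conv_lhs => rw [← hMQ]
    rw [hW]; simp only [Matrix.mul_assoc]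
  have hQVM : Q * V * M = Q * W := by
    conv_lhs => rw [← hQM]
    rw [hW]; simp only [Matrix.mul_assoc]
  -- key identity: M * V = W * Q * V
  have h0 : (M - W * Q) * V * (M - Q * W) = 0 := by
    have t2 : M * V * (Q * W) = W := by
      calc M * V * (Q * W) = (M * V * Q) * W := by rw [← Matrix.mul_assoc]
      _ = (W * Q) * W := by rw [hMVQ]
      _ = W := hQ1
    have t3 : W * Q * V * M = W := by
      calc W * Q * V * M = W * (Q * V * M) := by simp only [Matrix.mul_assoc]
      _ = W * (Q * W) := by rw [hQVM]
      _ = W * Q * W := by rw [← Matrix.mul_assoc]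
      _ = W := hQ1
    have t4 : W * Q * V * (Q * W) = W := by
      calc W * Q * V * (Q * W) = W * (Q * V * Q) * W := by simp only [Matrix.mul_assoc]
      _ = W * Q * W := by rw [hQVQ]
      _ = W := hQ1
    have e : (M - W * Q) * V * (M - Q * W)
        = (M * V * M - M * V * (Q * W)) - (W * Q * V * M - W * Q * V * (Q * W)) := by
      noncomm_ring
    rw [e, ← hW, t2, t3, t4]
    abel
  have hMV : M * V = W * Q * V := by
    have hBt : (M - W * Q)ᵀ = M - Q * W := by
      rw [transpose_sub, hMt, transpose_mul, hQt, hWt]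
    have h1 : (M - W * Q) * V = 0 := by
      apply psd_cancel hV
      rw [hBt]; exact h0
    have h2 : M * V - W * Q * V = 0 := by
      rw [← sub_mul]; exact h1
    exact sub_eq_zero.mp h2
  -- square root facts
  open scoped MatrixOrder in
  have hCC : CFC.sqrt V * CFC.sqrt V = V := CFC.sqrt_mul_sqrt_self V hV.nonneg
  open scoped MatrixOrder in
  set C := CFC.sqrt V with hCdef
  open scoped MatrixOrder in
  have hCt : Cᵀ = C := (CFC.sqrt_nonneg V).posSemidef.1
  clear_value C
  have hPt : (C * Q * C)ᵀ = C * Q * C := by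
    simp only [transpose_mul, hCt, hQt, Matrix.mul_assoc]
  have hPP2 : (C * Q * C) * (C * Q * C) = C * Q * C := by
    calc (C * Q * C) * (C * Q * C) = C * (Q * (C * C) * Q) * C := by
          simp only [Matrix.mul_assoc]
    _ = C * (Q * V * Q) * C := by rw [hCC]
    _ = C * Q * C := by rw [hQVQ]
  have h1P : (1 - C * Q * C) * (1 - C * Q * C) = 1 - C * Q * C := by
    have e : (1 - C * Q * C) * (1 - C * Q * C)
        = 1 - C * Q * C - C * Q * C + (C * Q * C) * (C * Q * C) := by noncomm_ring
    rw [e, hPP2]; abel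
  have hCPC : C * (C * Q * C) * C = V * Q * V := by
    calc C * (C * Q * C) * C = (C * C) * Q * (C * C) := by simp only [Matrix.mul_assoc]
    _ = V * Q * V := by rw [hCC]
  have hDD : (C * (1 - C * Q * C)) * (C * (1 - C * Q * C))ᵀ = V - V * Q * V := by
    have hDt : (C * (1 - C * Q * C))ᵀ = (1 - C * Q * C) * C := by
      rw [transpose_mul, transpose_sub, transpose_one, hPt, hCt]
    rw [hDt]
    calc (C * (1 - C * Q * C)) * ((1 - C * Q * C) * C)
        = C * ((1 - C * Q * C) * (1 - C * Q * C)) * C := by simp only [Matrix.mul_assoc]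
    _ = C * (1 - C * Q * C) * C := by rw [h1P]
    _ = C * C - C * (C * Q * C) * C := by noncomm_ring
    _ = V - V * Q * V := by rw [hCPC, hCC]
  -- abbreviations
  set bh : Fin d → ℝ := (Xd * (1 - V * M * Q * M)).mulVec y with hbh
  set rh : Fin n → ℝ := y - X.mulVec bh with hrh0
  set u : Fin n → ℝ := M.mulVec y with hu0
  clear_value bh rh u
  have hVMQM : V * M * Q * M = V * Q := by
    rw [Matrix.mul_assoc (V * M) Q M, hQM, Matrix.mul_assoc, hMQ]
  have hXXd : X * Xd = 1 - M := by
    rw [hM]; exact (sub_sub_cancel 1 (X * Xd)).symm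
  have hXbh : X.mulVec bh = ((1 - M) * (1 - V * Q)).mulVec y := by
    rw [hbh, mulVec_mulVec]
    rw [hVMQM, ← Matrix.mul_assoc, hXXd]
  have hrh1 : rh = (M + V * Q - W * Q).mulVec y := by
    rw [hrh0, hXbh]
    have e : (1 - M) * (1 - V * Q) = 1 - (M + V * Q - W * Q) := by
      have e2 : (1 - M) * (1 - V * Q) = 1 - M - V * Q + M * (V * Q) := by noncomm_ring
      rw [e2, ← Matrix.mul_assoc, hMVQ]; abel
    rw [e, sub_mulVec, one_mulVec]
    abel
  have hQMy : Q.mulVec y = Q.mulVec u := by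
    rw [hu0, mulVec_mulVec, hQM]
  have huz : u = (M * V).mulVec z := by
    rw [hu0, ← hz, mulVec_mulVec]
    rw [mul_add, ← Matrix.mul_assoc, hMX, Matrix.zero_mul, zero_add]
  have hWQu : (W * Q).mulVec u = u := by
    have e : W * Q * (M * V) = M * V := by
      calc W * Q * (M * V) = W * (Q * M) * V := by simp only [Matrix.mul_assoc]
      _ = W * Q * V := by rw [hQM]
      _ = M * V := hMV.symm
    rw [huz, mulVec_mulVec, e]
  have hVQy : (V * Q).mulVec y = (V * Q).mulVec u := by
    rw [← mulVec_mulVec, ← mulVec_mulVec, hQMy]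
  have hWQy : (W * Q).mulVec y = (W * Q).mulVec u := by
    rw [← mulVec_mulVec, ← mulVec_mulVec, hQMy]
  have hrh : rh = (V * Q).mulVec u := by
    rw [hrh1, sub_mulVec, add_mulVec, ← hu0, hVQy, hWQy, hWQu]
    abel
  -- value of the objective at bh
  have hval_bh : rh ⬝ᵥ Vd.mulVec rh = u ⬝ᵥ Q.mulVec u := by
    have him : (V * Q)ᵀ * (Vd * (V * Q)) = Q := by
      rw [transpose_mul, hVt, hQt]
      calc Q * V * (Vd * (V * Q)) = Q * (V * Vd * V) * Q := by simp only [Matrix.mul_assoc]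
      _ = Q * V * Q := by rw [hVd.1]
      _ = Q := hQVQ
    rw [hrh, mulVec_mulVec, ← dp_helper, him]
  have hMr : ∀ β : Fin d → ℝ, M.mulVec (y - X.mulVec β) = u := by
    intro β
    rw [mulVec_sub, mulVec_mulVec, hMX, zero_mulVec, sub_zero, hu0]
  have hval_r : ∀ w : Fin n → ℝ,
      (V.mulVec w) ⬝ᵥ Vd.mulVec (V.mulVec w) = w ⬝ᵥ V.mulVec w := by
    intro w
    rw [mulVec_mulVec, ← dp_helper]
    have e : Vᵀ * (Vd * V) = V := by rw [hVt, ← Matrix.mul_assoc, hVd.1]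
    rw [e]
  have hval_u : ∀ w : Fin n → ℝ, u = (M * V).mulVec w →
      u ⬝ᵥ Q.mulVec u = w ⬝ᵥ (V * Q * V).mulVec w := by
    intro w hw
    rw [hw, mulVec_mulVec, ← dp_helper]
    have e : (M * V)ᵀ * (Q * (M * V)) = V * Q * V := by
      rw [transpose_mul, hVt, hMt]
      calc V * M * (Q * (M * V)) = V * (M * Q * M) * V := by simp only [Matrix.mul_assoc]
      _ = V * Q * V := by rw [hMQM]
    rw [e]
  have hdiff : ∀ w : Fin n → ℝ, 0 ≤ w ⬝ᵥ (V - V * Q * V).mulVec w := by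
    intro w
    have e : w ⬝ᵥ (V - V * Q * V).mulVec w
        = ((C * (1 - C * Q * C))ᵀ.mulVec w) ⬝ᵥ ((C * (1 - C * Q * C))ᵀ.mulVec w) := by
      rw [← dp_helper, transpose_transpose, hDD]
    rw [e]
    exact Finset.sum_nonneg fun i _ => mul_self_nonneg _
  refine ⟨⟨Q.mulVec u, ?_⟩, ?_, ?_⟩
  · rw [mulVec_mulVec]; exact hrh.symm
  · -- minimality
    intro β hβ
    obtain ⟨w, hw⟩ := hβ
    have hu_w : u = (M * V).mulVec w := by
      rw [← hMr β, ← hw, mulVec_mulVec]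
    have e1 : rh ⬝ᵥ Vd.mulVec rh = w ⬝ᵥ (V * Q * V).mulVec w := by
      rw [hval_bh]; exact hval_u w hu_w
    have e2 : (y - X.mulVec β) ⬝ᵥ Vd.mulVec (y - X.mulVec β) = w ⬝ᵥ V.mulVec w := by
      rw [← hw]; exact hval_r w
    rw [e1, e2]
    have h3 := hdiff w
    rw [sub_mulVec, dotProduct_sub] at h3
    linarith
  · -- uniqueness
    intro hrank β hβ heq
    obtain ⟨w, hw⟩ := hβ
    have hu_w : u = (M * V).mulVec w := by
      rw [← hMr β, ← hw, mulVec_mulVec]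
    have e1 : rh ⬝ᵥ Vd.mulVec rh = w ⬝ᵥ (V * Q * V).mulVec w := by
      rw [hval_bh]; exact hval_u w hu_w
    have e2 : (y - X.mulVec β) ⬝ᵥ Vd.mulVec (y - X.mulVec β) = w ⬝ᵥ V.mulVec w := by
      rw [← hw]; exact hval_r w
    rw [e1, e2] at heq
    have hzero : w ⬝ᵥ (V - V * Q * V).mulVec w = 0 := by
      rw [sub_mulVec, dotProduct_sub, heq, sub_self]
    have hDw : (C * (1 - C * Q * C))ᵀ.mulVec w = 0 := by
      have e : ((C * (1 - C * Q * C))ᵀ.mulVec w) ⬝ᵥ ((C * (1 - C * Q * C))ᵀ.mulVec w)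
          = 0 := by
        rw [← dp_helper, transpose_transpose, hDD]; exact hzero
      exact dotProduct_self_eq_zero.mp e
    have hVw : V.mulVec w = (V * Q * V).mulVec w := by
      have h4 : (V - V * Q * V).mulVec w = 0 := by
        rw [← hDD, ← mulVec_mulVec, hDw, mulVec_zero]
      rw [sub_mulVec] at h4
      exact sub_eq_zero.mp h4
    have hrh_r : rh = y - X.mulVec β := by
      rw [hrh, hu_w, mulVec_mulVec, ← hw]
      have e : (V * Q) * (M * V) = V * Q * V := by
        calc (V * Q) * (M * V) = V * (Q * M) * V := by simp only [Matrix.mul_assoc]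
        _ = V * Q * V := by rw [hQM]
      rw [e, ← hVw]
    have hXeq : X.mulVec β = X.mulVec bh := by
      have e : y - X.mulVec bh = y - X.mulVec β := by rw [← hrh0, hrh_r]
      exact (sub_right_injective e).symm
    exact rank_inj hrank hXeq
end

section
/- Let X be an n×d real matrix with full column rank (rank d) and V₀ an n×n positive semidefinite real matrix. Set M = I − X X† and K̂ = X† (I − V₀ M (M V₀ M)† M). Then K̂ X = I_d, and among all d×n real matrices K with K X = I_d (i.e., all linear unbiased estimators β̂ = K y for the model y = Xβ₀ + ε with Cov[ε] = V₀), the mean squared error tr(K V₀ Kᵀ) is minimized by K = K̂. -/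
open Matrix

lemma trace_mul_transpose_self_nonneg {d n : ℕ} (B : Matrix (Fin d) (Fin n) ℝ) :
    0 ≤ (B * Bᵀ).trace := by
  simp only [Matrix.trace, Matrix.diag, Matrix.mul_apply, Matrix.transpose_apply]
  refine Finset.sum_nonneg fun i _ => Finset.sum_nonneg fun j _ => mul_self_nonneg _

/-- BLUE: with `M = I − X X†` and `K̂ = X† (I − V₀ M (M V₀ M)† M)`, if `X` has full
column rank then `K̂ X = I` and `K̂` minimizes `tr(K V₀ Kᵀ)` among all `K` with
`K X = I`. -/
theorem stmt7 {n d : ℕ} (X : Matrix (Fin n) (Fin d) ℝ) (hX : X.rank = d)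
    (V₀ : Matrix (Fin n) (Fin n) ℝ) (hV₀ : V₀.PosSemidef)
    (Xd : Matrix (Fin d) (Fin n) ℝ) (hXd : IsMoorePenrose X Xd)
    (Q : Matrix (Fin n) (Fin n) ℝ)
    (hQ : IsMoorePenrose ((1 - X * Xd) * V₀ * (1 - X * Xd)) Q) :
    (Xd * (1 - V₀ * (1 - X * Xd) * Q * (1 - X * Xd))) * X = 1 ∧
      ∀ K : Matrix (Fin d) (Fin n) ℝ, K * X = 1 →
        ((Xd * (1 - V₀ * (1 - X * Xd) * Q * (1 - X * Xd))) * V₀ *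
            (Xd * (1 - V₀ * (1 - X * Xd) * Q * (1 - X * Xd)))ᵀ).trace ≤
          (K * V₀ * Kᵀ).trace := by
  obtain ⟨hX1, hX2, hX3, hX4⟩ := hXd
  obtain ⟨hQ1, hQ2, hQ3, hQ4⟩ := hQ
  set M : Matrix (Fin n) (Fin n) ℝ := 1 - X * Xd with hMdef
  set Kh : Matrix (Fin d) (Fin n) ℝ := Xd * (1 - V₀ * M * Q * M) with hKh
  -- M is symmetric
  have hMsymm : Mᵀ = M := by
    simp [hMdef, transpose_sub, hX3]
  -- M * X = 0
  have hMX : M * X = 0 := by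
    simp [hMdef, Matrix.sub_mul, Matrix.mul_assoc, hX1]
  -- Xd * X = 1 (full column rank)
  have hXdX : Xd * X = 1 := by
    have hrank : (Xd * X).rank = d := by
      have h1 : (Xd * X).rank ≤ d := by
        simpa using (Xd * X).rank_le_card_width
      have h2 : d ≤ (Xd * X).rank := by
        calc d = (X * (Xd * X)).rank := by
                rw [← Matrix.mul_assoc, hX1, hX]
          _ ≤ (Xd * X).rank := Matrix.rank_mul_le_right _ _
      omega
    -- rank d square matrix is a unit
    have hsurj : Function.Surjective (Xd * X).mulVecLin := by
      rw [← LinearMap.range_eq_top]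
      apply Submodule.eq_top_of_finrank_eq
      simpa [Matrix.rank] using hrank
    have hinj : Function.Injective (Xd * X).mulVecLin :=
      (LinearMap.injective_iff_surjective).mpr hsurj
    have hunit : IsUnit (Xd * X) := by
      rw [← Matrix.mulVec_injective_iff_isUnit]
      exact hinj
    have hidem : (Xd * X) * (Xd * X) = (Xd * X) * 1 := by
      rw [Matrix.mul_one, Matrix.mul_assoc, ← Matrix.mul_assoc X, hX1]
    exact hunit.mul_left_cancel hidem
  -- unbiasedness
  have hKhX : Kh * X = 1 := by
    rw [hKh, Matrix.mul_assoc, Matrix.sub_mul, Matrix.one_mul,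
      Matrix.mul_assoc (V₀ * M * Q), hMX, Matrix.mul_zero, sub_zero, hXdX]
  refine ⟨hKhX, ?_⟩
  -- key identity: V₀ * M * (1 - Q * (M * V₀ * M)) = 0
  set W : Matrix (Fin n) (Fin n) ℝ := M * V₀ * M with hW
  open scoped MatrixOrder in
  have hL := (CFC.sqrt_nonneg V₀).posSemidef
  open scoped MatrixOrder in
  set L : Matrix (Fin n) (Fin n) ℝ := CFC.sqrt V₀ with hLdef
  open scoped MatrixOrder in
  have hLL : L * L = V₀ := CFC.sqrt_mul_sqrt_self V₀ hV₀.nonneg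
  have hLsymm : Lᵀ = L := by
    have := hL.isHermitian
    rwa [Matrix.IsHermitian, Matrix.conjTranspose_eq_transpose_of_trivial] at this
  set N : Matrix (Fin n) (Fin n) ℝ := L * (M * (1 - Q * W)) with hN
  have hNzero : N = 0 := by
    rw [← Matrix.conjTranspose_mul_self_eq_zero (A := N)]
    rw [Matrix.conjTranspose_eq_transpose_of_trivial]
    have hWS : W * (1 - Q * W) = 0 := by
      rw [Matrix.mul_sub, Matrix.mul_one, ← Matrix.mul_assoc, hQ1, sub_self]
    have hNT : Nᵀ = (1 - Q * W)ᵀ * M * L := by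
      rw [hN, Matrix.transpose_mul, Matrix.transpose_mul, hLsymm, hMsymm, Matrix.mul_assoc]
    have : Nᵀ * N = (1 - Q * W)ᵀ * (W * (1 - Q * W)) := by
      rw [hNT, hN, hW]
      simp only [Matrix.mul_assoc, ← hLL]
    rw [this, hWS, Matrix.mul_zero]
  have hkey : V₀ * M * (1 - Q * W) = 0 := by
    have : V₀ * M * (1 - Q * W) = L * N := by
      rw [hN, ← Matrix.mul_assoc L L, hLL, Matrix.mul_assoc]
    rw [this, hNzero, Matrix.mul_zero]
  -- hence K̂ * V₀ * M = 0
  have hKhVM : Kh * V₀ * M = 0 := by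
    have : Kh * V₀ * M = Xd * (V₀ * M * (1 - Q * W)) := by
      rw [hKh, hW]
      simp only [Matrix.mul_sub, Matrix.sub_mul, Matrix.mul_one, Matrix.one_mul,
        Matrix.mul_assoc]
    rw [this, hkey, Matrix.mul_zero]
  intro K hKX
  set D : Matrix (Fin d) (Fin n) ℝ := K - Kh with hD
  have hDX : D * X = 0 := by rw [hD, Matrix.sub_mul, hKX, hKhX, sub_self]
  have hDM : D * M = D := by
    rw [hMdef, Matrix.mul_sub, Matrix.mul_one, ← Matrix.mul_assoc, hDX,
      Matrix.zero_mul, sub_zero]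
  have hV₀symm : V₀ᵀ = V₀ := by
    have := hV₀.isHermitian
    rwa [Matrix.IsHermitian, Matrix.conjTranspose_eq_transpose_of_trivial] at this
  -- cross term vanishes
  have hcross : Kh * V₀ * Dᵀ = 0 := by
    have : Kh * V₀ * Dᵀ = (Kh * V₀ * M) * Dᵀ := by
      rw [Matrix.mul_assoc (Kh * V₀), ← hMsymm, ← Matrix.transpose_mul, hDM]
    rw [this, hKhVM, Matrix.zero_mul]
  have hcross' : D * V₀ * Khᵀ = 0 := by
    have : D * V₀ * Khᵀ = (Kh * V₀ * Dᵀ)ᵀ := by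
      simp [Matrix.transpose_mul, hV₀symm, Matrix.mul_assoc]
    rw [this, hcross, Matrix.transpose_zero]
  -- expand
  have hexpand : K * V₀ * Kᵀ = Kh * V₀ * Khᵀ + D * V₀ * Dᵀ := by
    have hK : K = Kh + D := by rw [hD]; abel
    rw [hK]
    simp only [Matrix.transpose_add, Matrix.add_mul, Matrix.mul_add]
    rw [hcross, hcross']
    abel
  have htr : (K * V₀ * Kᵀ).trace = (Kh * V₀ * Khᵀ).trace + (D * V₀ * Dᵀ).trace := by
    rw [hexpand, Matrix.trace_add]
  have hpos : 0 ≤ (D * V₀ * Dᵀ).trace := by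
    have : D * V₀ * Dᵀ = (D * L) * (D * L)ᵀ := by
      rw [Matrix.transpose_mul, hLsymm, ← Matrix.mul_assoc, Matrix.mul_assoc D L L, hLL]
    rw [this]
    exact trace_mul_transpose_self_nonneg _
  rw [htr]
  linarith
end

section
/- Let y ∈ ℝⁿ with y ≠ 0, x ∈ ℝᵐ, and W an m×m positive semidefinite real matrix with diagonal entries w₁₁, …, w_mm. Then the infimum, over all diagonal matrices A = diag(a₁, …, a_m) with aᵢ ≥ 0 and x ∈ range(A), of xᵀ A† x + tr(W A)/‖y‖₂² equals (2/‖y‖₂) Σᵢ √(wᵢᵢ) |xᵢ|. If moreover wᵢᵢ > 0 for every index i with xᵢ ≠ 0, the infimum is attained at Â = diag(â₁, …, â_m) with âᵢ = ‖y‖₂ |xᵢ| / √(wᵢᵢ) when wᵢᵢ > 0 and âᵢ = 0 otherwise. -/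
open Matrix

lemma amgm (w a x N : ℝ) (hw : 0 ≤ w) (ha : 0 ≤ a) (hN : 0 < N)
    (h0 : a = 0 → x = 0) :
    2 / Real.sqrt N * (Real.sqrt w * |x|) ≤ x * (a⁻¹ * x) + w * a / N := by
  rcases eq_or_lt_of_le ha with h | h
  · simp [← h, h0 h.symm]
  · have hsN : 0 < Real.sqrt N := Real.sqrt_pos.2 hN
    have hNsq : Real.sqrt N * Real.sqrt N = N := Real.mul_self_sqrt hN.le
    have hwsq : Real.sqrt w * Real.sqrt w = w := Real.mul_self_sqrt hw
    have hws : 0 ≤ Real.sqrt w := Real.sqrt_nonneg w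
    have hxx : x * (a⁻¹ * x) = |x| * |x| / a := by
      rw [← abs_mul_abs_self]; field_simp; simp
    have key : ∀ t s : ℝ, 0 < t → 0 ≤ s →
        2 / t * (s * |x|) ≤ |x| * |x| / a + s * s * a / (t * t) := by
      intro t s ht hs
      rw [div_add_div _ _ h.ne' (by positivity), div_mul_eq_mul_div,
        div_le_div_iff₀ ht (by positivity)]
      nlinarith [mul_nonneg ht.le (sq_nonneg (|x| * t - s * a)), abs_nonneg x,
        mul_pos ht ht, sq_nonneg (|x| * t - s * a)]
    have := key (Real.sqrt N) (Real.sqrt w) hsN hws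
    rw [hwsq, hNsq] at this
    rw [hxx]
    exact this

lemma optval (w x N : ℝ) (hw : 0 ≤ w) (hN : 0 < N) (hx : x ≠ 0 → 0 < w) :
    (x * ((if 0 < w then Real.sqrt N * |x| / Real.sqrt w else 0)⁻¹ * x) +
      w * (if 0 < w then Real.sqrt N * |x| / Real.sqrt w else 0) / N) =
      2 / Real.sqrt N * (Real.sqrt w * |x|) := by
  by_cases hwp : 0 < w
  · simp only [if_pos hwp]
    rcases eq_or_ne x 0 with rfl | hx0
    · simp
    · have hsN : 0 < Real.sqrt N := Real.sqrt_pos.2 hN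
      have hsw : 0 < Real.sqrt w := Real.sqrt_pos.2 hwp
      have hxa : 0 < |x| := abs_pos.2 hx0
      have hNsq : Real.sqrt N * Real.sqrt N = N := Real.mul_self_sqrt hN.le
      have hwsq : Real.sqrt w * Real.sqrt w = w := Real.mul_self_sqrt hw
      have hxsq : |x| * |x| = x * x := abs_mul_abs_self x
      field_simp
      linear_combination (-(Real.sqrt w * Real.sqrt w * N)) * hxsq +
        (|x| * |x| * w) * hNsq +
        (-(|x| * |x| * N)) * hwsq
  · have hx0 : x = 0 := by by_contra h; exact hwp (hx h)
    simp [hx0, hwp]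

lemma range_diag_iff {m : ℕ} (a x : Fin m → ℝ) :
    x ∈ Set.range (Matrix.diagonal a).mulVec ↔ ∀ i, a i = 0 → x i = 0 := by
  constructor
  · rintro ⟨v, rfl⟩ i hi
    simp [mulVec_diagonal, hi]
  · intro h
    refine ⟨fun i => (a i)⁻¹ * x i, ?_⟩
    funext i
    rcases eq_or_ne (a i) 0 with h0 | h0
    · simp [mulVec_diagonal, h0, h i h0]
    · simp [mulVec_diagonal]; field_simp

lemma val_eq {n m : ℕ} (x a : Fin m → ℝ) (W : Matrix (Fin m) (Fin m) ℝ)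
    (y : Fin n → ℝ) :
    x ⬝ᵥ (Matrix.diagonal fun i => (a i)⁻¹).mulVec x +
      (W * Matrix.diagonal a).trace / (y ⬝ᵥ y) =
    ∑ i, (x i * ((a i)⁻¹ * x i) + W i i * a i / (y ⬝ᵥ y)) := by
  rw [Finset.sum_add_distrib]
  congr 1
  · simp [dotProduct, mulVec_diagonal]
  · rw [← Finset.sum_div]
    congr 1
    simp [Matrix.trace, Matrix.diag, Matrix.mul_diagonal]

/-- The infimum, over diagonal `A = diag(a)` with nonnegative entries and
`x ∈ range(A)`, of `xᵀ A† x + tr(W A)/‖y‖₂²` equals `(2/‖y‖₂) Σᵢ √(wᵢᵢ)|xᵢ|`;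
if `wᵢᵢ > 0` whenever `xᵢ ≠ 0`, it is attained at `âᵢ = ‖y‖₂|xᵢ|/√(wᵢᵢ)`
(`âᵢ = 0` when `wᵢᵢ = 0`). Note `A† = diag(a₁†,…,a_m†)` with `0† = 0`. -/
theorem stmt13 {n m : ℕ} (y : Fin n → ℝ) (hy0 : y ≠ 0) (x : Fin m → ℝ)
    (W : Matrix (Fin m) (Fin m) ℝ) (hW : W.PosSemidef) :
    sInf {r : ℝ | ∃ a : Fin m → ℝ, (∀ i, 0 ≤ a i) ∧
        x ∈ Set.range (Matrix.diagonal a).mulVec ∧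
        r = x ⬝ᵥ (Matrix.diagonal fun i => (a i)⁻¹).mulVec x +
          (W * Matrix.diagonal a).trace / (y ⬝ᵥ y)} =
      2 / Real.sqrt (y ⬝ᵥ y) * ∑ i, Real.sqrt (W i i) * |x i| ∧
    ((∀ i, x i ≠ 0 → 0 < W i i) →
      (∀ i, 0 ≤ (fun i => if 0 < W i i then
          Real.sqrt (y ⬝ᵥ y) * |x i| / Real.sqrt (W i i) else 0) i) ∧
      x ∈ Set.range (Matrix.diagonal fun i => if 0 < W i i then
          Real.sqrt (y ⬝ᵥ y) * |x i| / Real.sqrt (W i i) else 0).mulVec ∧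
      x ⬝ᵥ (Matrix.diagonal fun i => ((if 0 < W i i then
            Real.sqrt (y ⬝ᵥ y) * |x i| / Real.sqrt (W i i) else 0))⁻¹).mulVec x +
          (W * Matrix.diagonal (fun i => if 0 < W i i then
            Real.sqrt (y ⬝ᵥ y) * |x i| / Real.sqrt (W i i) else 0)).trace / (y ⬝ᵥ y) =
        2 / Real.sqrt (y ⬝ᵥ y) * ∑ i, Real.sqrt (W i i) * |x i|) := by
  have hN : 0 < y ⬝ᵥ y := by
    rcases (dotProduct_self_eq_zero (v := y)).not.2 hy0 with h
    have h0 : 0 ≤ y ⬝ᵥ y := by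
      apply Finset.sum_nonneg; intro i _; exact mul_self_nonneg _
    exact lt_of_le_of_ne h0 (Ne.symm h)
  set N := y ⬝ᵥ y with hNdef
  have hWd : ∀ i, 0 ≤ W i i := fun i => by exact hW.diag_nonneg
  have hsN : 0 < Real.sqrt N := Real.sqrt_pos.2 hN
  -- lower bound for all elements of the set
  have lb : ∀ r ∈ {r : ℝ | ∃ a : Fin m → ℝ, (∀ i, 0 ≤ a i) ∧
        x ∈ Set.range (Matrix.diagonal a).mulVec ∧
        r = x ⬝ᵥ (Matrix.diagonal fun i => (a i)⁻¹).mulVec x +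
          (W * Matrix.diagonal a).trace / (y ⬝ᵥ y)},
      2 / Real.sqrt N * ∑ i, Real.sqrt (W i i) * |x i| ≤ r := by
    rintro r ⟨a, ha, hrange, rfl⟩
    rw [val_eq, Finset.mul_sum]
    apply Finset.sum_le_sum
    intro i _
    exact amgm (W i i) (a i) (x i) N (hWd i) (ha i) hN
      ((range_diag_iff a x).1 hrange i)
  have hne : ({r : ℝ | ∃ a : Fin m → ℝ, (∀ i, 0 ≤ a i) ∧
        x ∈ Set.range (Matrix.diagonal a).mulVec ∧
        r = x ⬝ᵥ (Matrix.diagonal fun i => (a i)⁻¹).mulVec x +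
          (W * Matrix.diagonal a).trace / (y ⬝ᵥ y)}).Nonempty := by
    refine ⟨_, ⟨fun _ => 1, fun i => zero_le_one, ?_, rfl⟩⟩
    rw [range_diag_iff]
    intro i hi
    exact absurd hi one_ne_zero
  constructor
  · apply le_antisymm
    · rw [Real.sInf_le_iff ⟨_, lb⟩ hne]
      intro ε hε
      set C : ℝ := ∑ i, x i * x i with hC
      have hC0 : 0 ≤ C := Finset.sum_nonneg fun i _ => mul_self_nonneg _
      set T : ℝ := C / ε + 1 with hT
      have hT0 : 0 < T := by positivity
      set a : Fin m → ℝ := fun i => if 0 < W i i then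
          Real.sqrt N * |x i| / Real.sqrt (W i i) else (if x i = 0 then 0 else T)
        with hadef
      refine ⟨_, ⟨a, ?_, ?_, rfl⟩, ?_⟩
      · intro i
        simp only [hadef]
        split
        · positivity
        · split
          · exact le_rfl
          · exact hT0.le
      · rw [range_diag_iff]
        intro i hi
        simp only [hadef] at hi
        by_cases hw : 0 < W i i
        · rw [if_pos hw] at hi
          have hsw : 0 < Real.sqrt (W i i) := Real.sqrt_pos.2 hw
          have := div_eq_zero_iff.1 hi
          rcases this with h | h
          · rcases mul_eq_zero.1 h with h' | h'
            · exact absurd h' hsN.ne'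
            · exact abs_eq_zero.1 h'
          · exact absurd h hsw.ne'
        · rw [if_neg hw] at hi
          by_cases hx0 : x i = 0
          · exact hx0
          · rw [if_neg hx0] at hi
            exact absurd hi hT0.ne'
      · rw [val_eq]
        have step : ∀ i ∈ Finset.univ,
            x i * ((a i)⁻¹ * x i) + W i i * a i / N ≤
              2 / Real.sqrt N * (Real.sqrt (W i i) * |x i|) + x i * x i / T := by
          intro i _
          by_cases hw : 0 < W i i
          · have : a i = if 0 < W i i then
                Real.sqrt N * |x i| / Real.sqrt (W i i) else 0 := by
              simp [hadef, hw]
            rw [this, optval (W i i) (x i) N (hWd i) hN (fun _ => hw)]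
            have : 0 ≤ x i * x i / T := div_nonneg (mul_self_nonneg _) hT0.le
            linarith
          · have hw0 : W i i = 0 := le_antisymm (not_lt.1 hw) (hWd i)
            by_cases hx0 : x i = 0
            · have : a i = 0 := by simp [hadef, hw, hx0]
              rw [this, hx0, hw0]
              simp
            · have : a i = T := by simp [hadef, hw, hx0]
              rw [this, hw0]
              have h1 : Real.sqrt (0:ℝ) = 0 := Real.sqrt_zero
              rw [h1]
              have : x i * (T⁻¹ * x i) = x i * x i / T := by ring
              rw [this]
              simp
        have sum_le := Finset.sum_le_sum step
        have hCT : C / T < ε := by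
          rw [div_lt_iff₀ hT0]
          have : ε * T = C + ε := by
            rw [hT]; field_simp
          rw [this]
          linarith
        apply lt_of_le_of_lt sum_le
        have hsum : ∑ i, (2 / Real.sqrt N * (Real.sqrt (W i i) * |x i|) + x i * x i / T)
            = 2 / Real.sqrt N * (∑ i, Real.sqrt (W i i) * |x i|) + C / T := by
          rw [Finset.sum_add_distrib, ← Finset.mul_sum, ← Finset.sum_div]
        rw [hsum]
        exact add_lt_add_right hCT _
    · exact le_csInf hne lb
  · intro hpos
    refine ⟨fun i => ?_, ?_, ?_⟩
    · dsimp only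
      split
      · positivity
      · exact le_rfl
    · rw [range_diag_iff]
      intro i hi
      by_cases hw : 0 < W i i
      · rw [if_pos hw] at hi
        have hsw : 0 < Real.sqrt (W i i) := Real.sqrt_pos.2 hw
        rcases div_eq_zero_iff.1 hi with h | h
        · rcases mul_eq_zero.1 h with h' | h'
          · exact absurd h' hsN.ne'
          · exact abs_eq_zero.1 h'
        · exact absurd h hsw.ne'
      · by_contra hx0
        exact hw (hpos i hx0)
    · rw [val_eq, Finset.mul_sum]
      apply Finset.sum_congr rfl
      intro i _
      exact optval (W i i) (x i) N (hWd i) hN (hpos i)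
end

section
/- Let y ∈ ℝⁿ with y ≠ 0, x ∈ ℝᵐ, and W, A m×m positive semidefinite real matrices with x ∈ range(A). Then xᵀ A† x + tr(W A)/‖y‖₂² ≥ (2/‖y‖₂) √(xᵀ W x). -/
open Matrix

open scoped MatrixOrder

lemma psd_trace_nonneg {m : ℕ} {M : Matrix (Fin m) (Fin m) ℝ} (hM : M.PosSemidef) :
    0 ≤ M.trace := by
  rw [Matrix.trace]
  apply Finset.sum_nonneg
  intro i _
  have h := hM.dotProduct_mulVec_nonneg (Pi.single i 1)
  simpa [dotProduct, Matrix.mulVec, Pi.single_apply, Finset.mul_sum] using h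

lemma psd_trace_mul_nonneg {m : ℕ} {M N : Matrix (Fin m) (Fin m) ℝ}
    (hM : M.PosSemidef) (hN : N.PosSemidef) : 0 ≤ (M * N).trace := by
  have hS := (CFC.sqrt_nonneg M).posSemidef
  rw [show M * N = CFC.sqrt M * (CFC.sqrt M * N) by rw [← mul_assoc, CFC.sqrt_mul_sqrt_self M hM.nonneg],
    Matrix.trace_mul_comm, mul_assoc]
  refine psd_trace_nonneg ?_
  rw [show CFC.sqrt M * (N * CFC.sqrt M) = (CFC.sqrt M)ᴴ * N * CFC.sqrt M by rw [hS.1.eq, mul_assoc]]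
  exact hN.conjTranspose_mul_mul_same _

lemma psd_quad_le_trace {m : ℕ} {M : Matrix (Fin m) (Fin m) ℝ} (hM : M.PosSemidef)
    (v : Fin m → ℝ) : v ⬝ᵥ M.mulVec v ≤ (v ⬝ᵥ v) * M.trace := by
  have hN : Matrix.PosSemidef ((v ⬝ᵥ v) • (1 : Matrix (Fin m) (Fin m) ℝ) - vecMulVec v v) := by
    refine Matrix.PosSemidef.of_dotProduct_mulVec_nonneg ?_ ?_
    · unfold Matrix.IsHermitian
      ext i j
      by_cases h : i = j
      · subst h; simp [Matrix.vecMulVec, mul_comm]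
      · simp [Matrix.vecMulVec, Matrix.one_apply, h, Ne.symm h, mul_comm,
          Matrix.conjTranspose_apply]
    · intro w
      have hcs := Finset.sum_mul_sq_le_sq_mul_sq Finset.univ v w
      have h1 : star w ⬝ᵥ mulVec (vecMulVec v v) w = (v ⬝ᵥ w) ^ 2 := by
        simp only [star_trivial, dotProduct, Matrix.mulVec, Matrix.vecMulVec,
          Matrix.of_apply, sq, Finset.mul_sum, Finset.sum_mul]
        rw [Finset.sum_comm]
        exact Finset.sum_congr rfl fun j _ => Finset.sum_congr rfl fun i _ => by ring
      have h2 : star w ⬝ᵥ mulVec ((v ⬝ᵥ v) • (1 : Matrix (Fin m) (Fin m) ℝ)) w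
          = (v ⬝ᵥ v) * (w ⬝ᵥ w) := by
        simp [Matrix.smul_mulVec, Matrix.one_mulVec, dotProduct_smul]
      rw [Matrix.sub_mulVec, dotProduct_sub, h1, h2]
      have h3 : (v ⬝ᵥ w) ^ 2 ≤ (v ⬝ᵥ v) * (w ⬝ᵥ w) := by
        simpa [dotProduct, sq] using hcs
      linarith
  have key := psd_trace_mul_nonneg hM hN
  have hexp : (M * ((v ⬝ᵥ v) • (1 : Matrix (Fin m) (Fin m) ℝ) - vecMulVec v v)).trace
      = (v ⬝ᵥ v) * M.trace - v ⬝ᵥ M.mulVec v := by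
    rw [mul_sub, Matrix.trace_sub]
    congr 1
    · rw [Matrix.mul_smul, mul_one, Matrix.trace_smul, smul_eq_mul]
    · simp only [Matrix.trace, Matrix.diag, Matrix.mul_apply, Matrix.vecMulVec, Matrix.of_apply,
        dotProduct, Matrix.mulVec, Finset.mul_sum]
      exact Finset.sum_congr rfl fun i _ => Finset.sum_congr rfl fun j _ => by ring
  rw [hexp] at key
  linarith

lemma dot_mulVec_left {m : ℕ} (A : Matrix (Fin m) (Fin m) ℝ) (u w : Fin m → ℝ) :
    A.mulVec u ⬝ᵥ w = u ⬝ᵥ Aᵀ.mulVec w := by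
  rw [Matrix.dotProduct_mulVec, Matrix.vecMul_transpose]

/-- For PSD `W, A` with `x ∈ range(A)`:
`xᵀ A† x + tr(W A)/‖y‖₂² ≥ (2/‖y‖₂) √(xᵀ W x)`. -/
theorem stmt14 {n m : ℕ} (y : Fin n → ℝ) (hy0 : y ≠ 0) (x : Fin m → ℝ)
    (W A : Matrix (Fin m) (Fin m) ℝ) (hW : W.PosSemidef) (hA : A.PosSemidef)
    (Ad : Matrix (Fin m) (Fin m) ℝ) (hAd : IsMoorePenrose A Ad)
    (hx : x ∈ Set.range A.mulVec) :
    2 / Real.sqrt (y ⬝ᵥ y) * Real.sqrt (x ⬝ᵥ W.mulVec x) ≤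
      x ⬝ᵥ Ad.mulVec x + (W * A).trace / (y ⬝ᵥ y) := by
  obtain ⟨u, hu⟩ := hx
  have hAsym : Aᵀ = A := hA.1.eq
  set s := y ⬝ᵥ y with hs_def
  have hs : 0 < s := by
    have hnn : 0 ≤ s := Finset.sum_nonneg fun i _ => mul_self_nonneg (y i)
    exact hnn.lt_of_ne fun h => hy0 (dotProduct_self_eq_zero.mp h.symm)
  set S := CFC.sqrt A with hS_def
  have hSpsd := (CFC.sqrt_nonneg A).posSemidef
  have hSsym : Sᵀ = S := hSpsd.1.eq
  have hSS : S * S = A := CFC.sqrt_mul_sqrt_self A hA.nonneg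
  -- x ⬝ Ad x = u ⬝ A u
  have h1 : x ⬝ᵥ Ad.mulVec x = u ⬝ᵥ A.mulVec u := by
    rw [← hu, Matrix.mulVec_mulVec, dot_mulVec_left, Matrix.mulVec_mulVec, hAsym,
      ← mul_assoc, hAd.1]
  -- x ⬝ W x = v ⬝ M v where v = S u, M = S W S
  have h2 : x ⬝ᵥ W.mulVec x = (S.mulVec u) ⬝ᵥ (S * W * S).mulVec (S.mulVec u) := by
    rw [← hu, Matrix.mulVec_mulVec, dot_mulVec_left, Matrix.mulVec_mulVec, hAsym,
      Matrix.mulVec_mulVec, dot_mulVec_left, Matrix.mulVec_mulVec, hSsym]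
    rw [← hSS]
    simp only [mul_assoc]
  have hMpsd : (S * W * S).PosSemidef := by
    rw [show S * W * S = Sᴴ * W * S by rw [hSpsd.1.eq]]
    exact hW.conjTranspose_mul_mul_same _
  have h3 : (S.mulVec u) ⬝ᵥ (S.mulVec u) = u ⬝ᵥ A.mulVec u := by
    rw [dot_mulVec_left, Matrix.mulVec_mulVec, hSsym, hSS]
  have h4 : (S * W * S).trace = (W * A).trace := by
    rw [Matrix.trace_mul_cycle, hSS, Matrix.trace_mul_comm]
  -- key inequality
  have hkey : x ⬝ᵥ W.mulVec x ≤ (x ⬝ᵥ Ad.mulVec x) * (W * A).trace := by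
    rw [h2, h1, ← h3, ← h4]
    exact psd_quad_le_trace hMpsd _
  set a := x ⬝ᵥ Ad.mulVec x with ha_def
  set t := (W * A).trace with ht_def
  have ha : 0 ≤ a := by
    rw [h1]
    simpa using hA.dotProduct_mulVec_nonneg u
  have ht : 0 ≤ t := psd_trace_mul_nonneg hW hA
  have hxw : 0 ≤ x ⬝ᵥ W.mulVec x := by simpa using hW.dotProduct_mulVec_nonneg x
  calc 2 / Real.sqrt s * Real.sqrt (x ⬝ᵥ W.mulVec x)
      ≤ 2 / Real.sqrt s * Real.sqrt (a * t) := by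
        apply mul_le_mul_of_nonneg_left (Real.sqrt_le_sqrt hkey)
        positivity
    _ = 2 * Real.sqrt a * Real.sqrt (t / s) := by
        rw [Real.sqrt_mul ha, Real.sqrt_div ht]
        rw [div_mul_eq_mul_div, mul_div_assoc, mul_assoc, mul_div_assoc]
    _ ≤ Real.sqrt a ^ 2 + Real.sqrt (t / s) ^ 2 := by
        have := two_mul_le_add_sq (Real.sqrt a) (Real.sqrt (t / s))
        linarith
    _ = a + t / s := by
        rw [Real.sq_sqrt ha, Real.sq_sqrt (by positivity)]
end

section
/- Let y ∈ ℝⁿ with y ≠ 0, x ∈ ℝᵐ, and W an m×m positive semidefinite real matrix with W x ≠ 0. Then the matrix Â = (‖y‖₂ / √(xᵀ W x)) · x xᵀ is positive semidefinite, satisfies x ∈ range(Â), and achieves equality in the bound: xᵀ Â† x + tr(W Â)/‖y‖₂² = (2/‖y‖₂) √(xᵀ W x). Consequently the infimum over all positive semidefinite m×m matrices A with x ∈ range(A) of xᵀ A† x + tr(W A)/‖y‖₂² equals (2/‖y‖₂) √(xᵀ W x) and is attained at Â. -/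
open Matrix

section Aux

variable {m : ℕ}

private lemma vmm_mulVec (x w : Fin m → ℝ) : vecMulVec x x *ᵥ w = (x ⬝ᵥ w) • x := by
  ext i
  simp only [mulVec, vecMulVec_apply, dotProduct, Pi.smul_apply, smul_eq_mul, Finset.sum_mul]
  exact Finset.sum_congr rfl fun k _ => by ring

private lemma vmm_mul_mul (x : Fin m → ℝ) (B : Matrix (Fin m) (Fin m) ℝ) :
    vecMulVec x x * B * vecMulVec x x = (x ⬝ᵥ B *ᵥ x) • vecMulVec x x := by
  ext i j
  simp only [mul_apply, vecMulVec_apply, Matrix.smul_apply, smul_eq_mul, dotProduct, mulVec,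
    Finset.sum_mul, Finset.mul_sum]
  rw [Finset.sum_comm]
  congr 1; ext k; congr 1; ext l; ring

private lemma vmm_mul_self (x : Fin m → ℝ) :
    vecMulVec x x * vecMulVec x x = (x ⬝ᵥ x) • vecMulVec x x := by
  ext i j
  simp only [mul_apply, vecMulVec_apply, Matrix.smul_apply, smul_eq_mul, dotProduct, Finset.sum_mul]
  exact Finset.sum_congr rfl fun k _ => by ring

private lemma vmm_symm (x : Fin m → ℝ) : (vecMulVec x x)ᵀ = vecMulVec x x := by
  ext i j
  simp [vecMulVec_apply, mul_comm]

private lemma smul_vmm_mul (a b : ℝ) (x : Fin m → ℝ) :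
    (a • vecMulVec x x) * (b • vecMulVec x x) = (a * b * (x ⬝ᵥ x)) • vecMulVec x x := by
  rw [smul_mul_assoc, mul_smul_comm, vmm_mul_self, smul_smul, smul_smul, mul_assoc]

private lemma vmm_psd (x : Fin m → ℝ) {c : ℝ} (hc : 0 ≤ c) :
    (c • vecMulVec x x).PosSemidef := by
  refine Matrix.PosSemidef.of_dotProduct_mulVec_nonneg ?_ ?_
  · unfold IsHermitian
    ext i j
    simp [vecMulVec_apply, mul_comm]
  · intro v
    have h : star v ⬝ᵥ (c • vecMulVec x x) *ᵥ v = c * (x ⬝ᵥ v) ^ 2 := by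
      rw [smul_mulVec, vmm_mulVec, star_trivial, dotProduct_smul, dotProduct_smul,
        smul_eq_mul, smul_eq_mul, dotProduct_comm]
      ring
    rw [h]
    positivity

private lemma trace_W_vmm (x : Fin m → ℝ) (W : Matrix (Fin m) (Fin m) ℝ) :
    (W * vecMulVec x x).trace = x ⬝ᵥ W *ᵥ x := by
  simp only [trace, diag, mul_apply, vecMulVec_apply, dotProduct, mulVec, Finset.mul_sum]
  congr 1; ext i; congr 1; ext j; ring

private lemma dot_sym (S : Matrix (Fin m) (Fin m) ℝ) (hS : Sᵀ = S) (u v : Fin m → ℝ) :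
    u ⬝ᵥ S *ᵥ v = (S *ᵥ u) ⬝ᵥ v := by
  rw [dotProduct_mulVec, ← mulVec_transpose, hS]

private lemma sym_of_psd {S : Matrix (Fin m) (Fin m) ℝ} (hS : S.PosSemidef) : Sᵀ = S := by
  have h := hS.isHermitian
  rwa [IsHermitian, conjTranspose_eq_transpose_of_trivial] at h

private lemma key_ineq (x : Fin m → ℝ) (W A B : Matrix (Fin m) (Fin m) ℝ)
    (hW : W.PosSemidef) (hA : A.PosSemidef) (h1 : A * B * A = A)
    (u : Fin m → ℝ) (hu : A *ᵥ u = x) :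
    0 ≤ x ⬝ᵥ B *ᵥ x ∧ 0 ≤ (W * A).trace ∧
      x ⬝ᵥ W *ᵥ x ≤ (x ⬝ᵥ B *ᵥ x) * (W * A).trace := by
  obtain ⟨S, hSsym, hS2⟩ : ∃ S : Matrix (Fin m) (Fin m) ℝ, Sᵀ = S ∧ S * S = A :=
    by open scoped MatrixOrder in
      exact ⟨CFC.sqrt A, sym_of_psd (CFC.sqrt_nonneg A).posSemidef, CFC.sqrt_mul_sqrt_self A hA.nonneg⟩
  obtain ⟨T, hTsym, hT2⟩ : ∃ T : Matrix (Fin m) (Fin m) ℝ, Tᵀ = T ∧ T * T = W :=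
    by open scoped MatrixOrder in
      exact ⟨CFC.sqrt W, sym_of_psd (CFC.sqrt_nonneg W).posSemidef, CFC.sqrt_mul_sqrt_self W hW.nonneg⟩
  have hAsym : Aᵀ = A := sym_of_psd hA
  set v := S *ᵥ u with hv
  set M := T * S with hM
  have ha : x ⬝ᵥ B *ᵥ x = v ⬝ᵥ v := by
    rw [← hu]
    calc (A *ᵥ u) ⬝ᵥ B *ᵥ (A *ᵥ u)
        = (A *ᵥ u) ⬝ᵥ (B * A) *ᵥ u := by rw [mulVec_mulVec]
      _ = u ⬝ᵥ (A * (B * A)) *ᵥ u := by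
          rw [← dot_sym A hAsym, mulVec_mulVec]
      _ = u ⬝ᵥ A *ᵥ u := by rw [← Matrix.mul_assoc, h1]
      _ = v ⬝ᵥ v := by
          rw [← hS2, ← mulVec_mulVec, dot_sym S hSsym]
  have hMv : M *ᵥ v = T *ᵥ x := by
    rw [hM, hv, mulVec_mulVec, Matrix.mul_assoc, hS2, ← mulVec_mulVec, hu]
  have hQ : x ⬝ᵥ W *ᵥ x = (M *ᵥ v) ⬝ᵥ (M *ᵥ v) := by
    rw [hMv, ← dot_sym T hTsym, mulVec_mulVec, hT2]
  have ht : (W * A).trace = ∑ i, ∑ j, (M i j) ^ 2 := by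
    have e0 : W * A = T * (T * S * S) := by
      rw [← hT2, ← hS2]; simp only [Matrix.mul_assoc]
    have e1 : (W * A).trace = (M * Mᵀ).trace := by
      rw [e0, trace_mul_comm]
      congr 1
      rw [hM, transpose_mul, hSsym, hTsym]
      simp only [Matrix.mul_assoc]
    rw [e1]
    simp only [trace, diag, mul_apply, transpose_apply, sq]
  refine ⟨?_, ?_, ?_⟩
  · rw [ha]; exact Finset.sum_nonneg fun i _ => mul_self_nonneg _
  · rw [ht]
    exact Finset.sum_nonneg fun i _ => Finset.sum_nonneg fun j _ => sq_nonneg _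
  · rw [ha, hQ, ht]
    have cs : ∀ i, ((M *ᵥ v) i) ^ 2 ≤ (∑ j, (M i j) ^ 2) * (∑ j, (v j) ^ 2) := by
      intro i
      simpa [mulVec, dotProduct] using
        Finset.sum_mul_sq_le_sq_mul_sq Finset.univ (fun j => M i j) v
    calc (M *ᵥ v) ⬝ᵥ (M *ᵥ v) = ∑ i, ((M *ᵥ v) i) ^ 2 := by
          simp [dotProduct, sq]
      _ ≤ ∑ i, (∑ j, (M i j) ^ 2) * (∑ j, (v j) ^ 2) := Finset.sum_le_sum fun i _ => cs i
      _ = (∑ j, (v j) ^ 2) * (∑ i, ∑ j, (M i j) ^ 2) := by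
          rw [← Finset.sum_mul, mul_comm]
      _ = (v ⬝ᵥ v) * ∑ i, ∑ j, (M i j) ^ 2 := by simp [dotProduct, sq]

private lemma amgm_s15 {a t Y Q : ℝ} (hY : 0 < Y) (hQ : 0 ≤ Q) (ha : 0 ≤ a) (ht : 0 ≤ t)
    (h : Q ≤ a * t) : 2 / Real.sqrt Y * Real.sqrt Q ≤ a + t / Y := by
  have hsY := Real.sqrt_pos.2 hY
  set b := t / Y with hb
  have hb0 : 0 ≤ b := div_nonneg ht hY.le
  have hab : Q ≤ a * b * Y := by
    have e : a * b * Y = a * t := by rw [hb]; field_simp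
    rw [e]; exact h
  have h2 : Real.sqrt Q ≤ Real.sqrt a * Real.sqrt b * Real.sqrt Y := by
    rw [← Real.sqrt_mul ha, ← Real.sqrt_mul (mul_nonneg ha hb0)]
    exact Real.sqrt_le_sqrt hab
  calc 2 / Real.sqrt Y * Real.sqrt Q
      ≤ 2 / Real.sqrt Y * (Real.sqrt a * Real.sqrt b * Real.sqrt Y) := by
        apply mul_le_mul_of_nonneg_left h2 (by positivity)
    _ = 2 * (Real.sqrt a * Real.sqrt b) := by field_simp
    _ ≤ a + b := by
        nlinarith [sq_nonneg (Real.sqrt a - Real.sqrt b), Real.sq_sqrt ha, Real.sq_sqrt hb0]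

end Aux

/-- With `W x ≠ 0`, the matrix `Â = (‖y‖₂/√(xᵀWx)) x xᵀ` is PSD, has
`x ∈ range(Â)`, achieves `xᵀ Â† x + tr(W Â)/‖y‖₂² = (2/‖y‖₂)√(xᵀWx)`, and this
value is the attained infimum over all PSD `A` with `x ∈ range(A)` of
`xᵀ A† x + tr(W A)/‖y‖₂²`. -/
theorem stmt15 {n m : ℕ} (y : Fin n → ℝ) (hy0 : y ≠ 0) (x : Fin m → ℝ)
    (W : Matrix (Fin m) (Fin m) ℝ) (hW : W.PosSemidef)
    (hWx : W.mulVec x ≠ 0) :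
    ((Real.sqrt (y ⬝ᵥ y) / Real.sqrt (x ⬝ᵥ W.mulVec x)) •
        vecMulVec x x).PosSemidef ∧
    x ∈ Set.range (Matrix.mulVec
      ((Real.sqrt (y ⬝ᵥ y) / Real.sqrt (x ⬝ᵥ W.mulVec x)) • vecMulVec x x)) ∧
    (∀ B : Matrix (Fin m) (Fin m) ℝ,
      IsMoorePenrose
        ((Real.sqrt (y ⬝ᵥ y) / Real.sqrt (x ⬝ᵥ W.mulVec x)) • vecMulVec x x) B →
      x ⬝ᵥ B.mulVec x +
          (W * ((Real.sqrt (y ⬝ᵥ y) / Real.sqrt (x ⬝ᵥ W.mulVec x)) •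
            vecMulVec x x)).trace / (y ⬝ᵥ y) =
        2 / Real.sqrt (y ⬝ᵥ y) * Real.sqrt (x ⬝ᵥ W.mulVec x)) ∧
    IsLeast {r : ℝ | ∃ A B : Matrix (Fin m) (Fin m) ℝ, A.PosSemidef ∧
        IsMoorePenrose A B ∧ x ∈ Set.range A.mulVec ∧
        r = x ⬝ᵥ B.mulVec x + (W * A).trace / (y ⬝ᵥ y)}
      (2 / Real.sqrt (y ⬝ᵥ y) * Real.sqrt (x ⬝ᵥ W.mulVec x)) := by
  have hY : 0 < y ⬝ᵥ y := by
    have h0 : (0:ℝ) ≤ y ⬝ᵥ y := Finset.sum_nonneg fun i _ => mul_self_nonneg _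
    exact h0.lt_of_ne' fun h => hy0 (dotProduct_self_eq_zero.mp h)
  have hx0 : x ≠ 0 := fun h => hWx (by rw [h, mulVec_zero])
  have hs : 0 < x ⬝ᵥ x := by
    have h0 : (0:ℝ) ≤ x ⬝ᵥ x := Finset.sum_nonneg fun i _ => mul_self_nonneg _
    exact h0.lt_of_ne' fun h => hx0 (dotProduct_self_eq_zero.mp h)
  have hQ0 : (0:ℝ) ≤ x ⬝ᵥ W *ᵥ x := by simpa using hW.dotProduct_mulVec_nonneg x
  have hQ : 0 < x ⬝ᵥ W *ᵥ x := by
    refine hQ0.lt_of_ne' fun h => hWx ?_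
    exact (hW.dotProduct_mulVec_zero_iff x).mp (by simpa using h)
  set sY := Real.sqrt (y ⬝ᵥ y) with hsYdef
  set sQ := Real.sqrt (x ⬝ᵥ W *ᵥ x) with hsQdef
  have hsY : 0 < sY := Real.sqrt_pos.2 hY
  have hsQ : 0 < sQ := Real.sqrt_pos.2 hQ
  have eY : sY ^ 2 = y ⬝ᵥ y := Real.sq_sqrt hY.le
  have eQ : sQ ^ 2 = x ⬝ᵥ W *ᵥ x := Real.sq_sqrt hQ.le
  set c := sY / sQ with hcdef
  have hc : 0 < c := div_pos hsY hsQ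
  -- Part 3 first (reused in part 4)
  have part3 : ∀ B : Matrix (Fin m) (Fin m) ℝ,
      IsMoorePenrose (c • vecMulVec x x) B →
      x ⬝ᵥ B *ᵥ x + (W * (c • vecMulVec x x)).trace / (y ⬝ᵥ y) = 2 / sY * sQ := by
    intro B hB
    have h1 := hB.1
    have e : (c • vecMulVec x x) * B * (c • vecMulVec x x)
        = (c * c * (x ⬝ᵥ B *ᵥ x)) • vecMulVec x x := by
      rw [smul_mul_assoc, smul_mul_assoc, mul_smul_comm, vmm_mul_mul, smul_smul, smul_smul]
    rw [e] at h1
    obtain ⟨i, hi⟩ := Function.ne_iff.mp hx0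
    have h2 : (c * c * (x ⬝ᵥ B *ᵥ x)) * (x i * x i) = c * (x i * x i) := by
      have := congrFun (congrFun h1 i) i
      simpa [vecMulVec_apply] using this
    have hβ : x ⬝ᵥ B *ᵥ x = 1 / c := by
      have hxi : x i * x i ≠ 0 := mul_self_ne_zero.mpr hi
      have h3 : c * c * (x ⬝ᵥ B *ᵥ x) = c := mul_right_cancel₀ hxi h2
      have h4 : c * c * (x ⬝ᵥ B *ᵥ x) = c * c * (1 / c) := by
        rw [h3]; field_simp
      exact mul_left_cancel₀ (by positivity) h4
    have htr : (W * (c • vecMulVec x x)).trace = c * (x ⬝ᵥ W *ᵥ x) := by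
      rw [mul_smul_comm, trace_smul, trace_W_vmm, smul_eq_mul]
    rw [hβ, htr, hcdef, ← eY, ← eQ]
    field_simp
    ring
  refine ⟨vmm_psd x hc.le, ?_, part3, ?_, ?_⟩
  · -- range
    refine ⟨(1 / (c * (x ⬝ᵥ x))) • x, ?_⟩
    rw [smul_mulVec, mulVec_smul, vmm_mulVec, smul_smul, smul_smul]
    have : c * (1 / (c * (x ⬝ᵥ x))) * (x ⬝ᵥ x) = 1 := by
      field_simp
    rw [this, one_smul]
  · -- membership in set
    set d := 1 / (c * (x ⬝ᵥ x) ^ 2) with hddef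
    have hmp : IsMoorePenrose (c • vecMulVec x x) (d • vecMulVec x x) := by
      have hAB : (c • vecMulVec x x) * (d • vecMulVec x x)
          = (1 / (x ⬝ᵥ x)) • vecMulVec x x := by
        rw [smul_vmm_mul]
        congr 1
        rw [hddef]; field_simp
      have hBA : (d • vecMulVec x x) * (c • vecMulVec x x)
          = (1 / (x ⬝ᵥ x)) • vecMulVec x x := by
        rw [smul_vmm_mul]
        congr 1
        rw [hddef]; field_simp
      have e1 : 1 / (x ⬝ᵥ x) * c * (x ⬝ᵥ x) = c := by field_simp
      have e2 : 1 / (x ⬝ᵥ x) * d * (x ⬝ᵥ x) = d := by field_simp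
      refine ⟨?_, ?_, ?_, ?_⟩
      · rw [hAB, smul_vmm_mul, e1]
      · rw [hBA, smul_vmm_mul, e2]
      · rw [hAB, transpose_smul, vmm_symm]
      · rw [hBA, transpose_smul, vmm_symm]
    exact ⟨c • vecMulVec x x, d • vecMulVec x x, vmm_psd x hc.le, hmp,
      ⟨(1 / (c * (x ⬝ᵥ x))) • x, by
        rw [smul_mulVec, mulVec_smul, vmm_mulVec, smul_smul, smul_smul]
        have : c * (1 / (c * (x ⬝ᵥ x))) * (x ⬝ᵥ x) = 1 := by field_simp
        rw [this, one_smul]⟩,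
      (part3 _ hmp).symm⟩
  · -- lower bound
    rintro r ⟨A, B, hApsd, hPen, ⟨u, hu⟩, rfl⟩
    obtain ⟨ha, ht, hQle⟩ := key_ineq x W A B hW hApsd hPen.1 u hu
    exact amgm_s15 hY hQ0 ha ht hQle
end

section
/- Let y ∈ ℝⁿ with y ≠ 0, X an n×d real matrix, and suppose β_LS ∈ ℝᵈ satisfies X β_LS = y. Set D* = β_LS β_LSᵀ, V* = 0, and N* = X D* Xᵀ + V*. Then N* = y yᵀ, the covariance-fitting criterion satisfies tr((y yᵀ − N*)ᵀ N*† (y yᵀ − N*)) = 0, and the corresponding estimate satisfies D* Xᵀ N*† y = β_LS. -/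
open Matrix

lemma aux_mul_vecMulVec {n d : ℕ} (X : Matrix (Fin n) (Fin d) ℝ) (a : Fin d → ℝ) :
    X * vecMulVec a a * Xᵀ = vecMulVec (X.mulVec a) (X.mulVec a) := by
  ext i j
  simp only [mul_apply, vecMulVec_apply, transpose_apply, mulVec, dotProduct,
    Finset.sum_mul, Finset.mul_sum]
  congr 1; ext k; congr 1; ext l; ring

/-- If `X β_LS = y`, then with `D* = β_LS β_LSᵀ`, `V* = 0`, `N* = X D* Xᵀ + V*`:
`N* = y yᵀ`, the SPICE criterion is zero, and `D* Xᵀ N*† y = β_LS`. -/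
theorem stmt16 {n d : ℕ} (y : Fin n → ℝ) (hy0 : y ≠ 0)
    (X : Matrix (Fin n) (Fin d) ℝ) (βLS : Fin d → ℝ)
    (hLS : X.mulVec βLS = y) :
    X * vecMulVec βLS βLS * Xᵀ + 0 = vecMulVec y y ∧
    (∀ Nd : Matrix (Fin n) (Fin n) ℝ,
      IsMoorePenrose (X * vecMulVec βLS βLS * Xᵀ + 0) Nd →
        ((vecMulVec y y - (X * vecMulVec βLS βLS * Xᵀ + 0))ᵀ * Nd *
            (vecMulVec y y - (X * vecMulVec βLS βLS * Xᵀ + 0))).trace = 0 ∧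
        (vecMulVec βLS βLS * Xᵀ * Nd).mulVec y = βLS) := by
  have hN : X * vecMulVec βLS βLS * Xᵀ + 0 = vecMulVec y y := by
    rw [add_zero, aux_mul_vecMulVec, hLS]
  refine ⟨hN, fun Nd hMP => ?_⟩
  rw [hN] at hMP ⊢
  obtain ⟨h1, -, -, -⟩ := hMP
  constructor
  · simp
  · -- scalar c = yᵀ Nd y equals 1
    set c : ℝ := y ⬝ᵥ Nd.mulVec y with hc
    have hcA : ∀ i j, y i * c * y j = y i * y j := by
      intro i j
      have := congrFun (congrFun h1 i) j
      simp only [mul_apply, vecMulVec_apply, dotProduct, mulVec, Finset.sum_mul,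
        Finset.mul_sum] at this ⊢
      rw [← this, hc]
      simp only [dotProduct, mulVec, Finset.mul_sum, Finset.sum_mul]
      rw [Finset.sum_comm]
      congr 1; ext k; congr 1; ext l; ring
    obtain ⟨i0, hi0⟩ : ∃ i, y i ≠ 0 := by
      by_contra h; push_neg at h; exact hy0 (funext h)
    have hc1 : c = 1 := by
      have := hcA i0 i0
      field_simp at this
      linarith
    -- D Xᵀ = vecMulVec βLS y
    have hDX : vecMulVec βLS βLS * Xᵀ = vecMulVec βLS y := by
      ext i j
      simp only [mul_apply, vecMulVec_apply, transpose_apply]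
      rw [← hLS]
      simp only [mulVec, dotProduct, Finset.mul_sum]
      congr 1; ext k; ring
    rw [hDX]
    ext i
    simp only [mulVec, dotProduct, mul_apply, vecMulVec_apply, Finset.sum_mul,
      Finset.mul_sum]
    have : ∑ j, ∑ k, βLS i * y k * Nd k j * y j = βLS i * c := by
      rw [hc]
      simp only [dotProduct, mulVec, Finset.mul_sum]
      rw [Finset.sum_comm]
      congr 1; ext k; congr 1; ext l; ring
    rw [this, hc1, mul_one]
end

section
/- Let y ∈ ℝⁿ with y ≠ 0, X a nonzero n×d real matrix, and β ∈ ℝᵈ. Then the infimum, over all pairs (c, v) of nonnegative reals such that y − Xβ ∈ range(v I_n) and β ∈ range(c I_d), of (y − Xβ)ᵀ (v I)† (y − Xβ) + βᵀ (c I)† β + tr(c X Xᵀ + v I)/‖y‖₂² equals (2n/‖y‖₂) · ( √(MSPE(β)) + λ ‖β‖₂ ), where MSPE(β) = ‖y − Xβ‖₂²/n, Ĉ = XᵀX/n, and λ = √(tr(Ĉ)/n). Consequently, minimizing this infimum over β is equivalent to minimizing the square-root ridge regression criterion √(MSPE(β)) + λ ‖β‖₂ with the tuned regularization parameter λ = √(tr(Ĉ)/n).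 -/
open Matrix

/-- The Moore–Penrose pseudoinverse of `κ I`: `κ⁻¹ I` for `κ ≠ 0`, and `0` for `κ = 0`. -/
noncomputable def pinvScal (m : ℕ) (κ : ℝ) : Matrix (Fin m) (Fin m) ℝ :=
  if κ = 0 then 0 else κ⁻¹ • 1

/-- The inner infimum over pairs `(c, v)` of nonnegative reals with
`y − Xβ ∈ range(v I)` and `β ∈ range(c I)` of
`(y − Xβ)ᵀ (vI)† (y − Xβ) + βᵀ (cI)† β + tr(c X Xᵀ + v I)/‖y‖₂²`. -/
noncomputable def innerInf {n d : ℕ} (y : Fin n → ℝ)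
    (X : Matrix (Fin n) (Fin d) ℝ) (β : Fin d → ℝ) : ℝ :=
  sInf {r : ℝ | ∃ c v : ℝ, 0 ≤ c ∧ 0 ≤ v ∧
    y - X.mulVec β ∈
      Set.range (Matrix.mulVec (v • (1 : Matrix (Fin n) (Fin n) ℝ))) ∧
    β ∈ Set.range (Matrix.mulVec (c • (1 : Matrix (Fin d) (Fin d) ℝ))) ∧
    r = (y - X.mulVec β) ⬝ᵥ (pinvScal n v).mulVec (y - X.mulVec β) +
      β ⬝ᵥ (pinvScal d c).mulVec β +
      (c • (X * Xᵀ) + v • (1 : Matrix (Fin n) (Fin n) ℝ)).trace / (y ⬝ᵥ y)}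

/-- The square-root ridge criterion `√(MSPE(β)) + λ ‖β‖₂`, with
`λ = √(tr(Ĉ)/n)` and `Ĉ = XᵀX/n`. -/
noncomputable def ridgeCrit {n d : ℕ} (y : Fin n → ℝ)
    (X : Matrix (Fin n) (Fin d) ℝ) (β : Fin d → ℝ) : ℝ :=
  Real.sqrt ((y - X.mulVec β) ⬝ᵥ (y - X.mulVec β) / n) +
    Real.sqrt (((1 / (n : ℝ)) • (Xᵀ * X)).trace / n) * Real.sqrt (β ⬝ᵥ β)

private lemma dot_self_nonneg {m : ℕ} (v : Fin m → ℝ) : 0 ≤ v ⬝ᵥ v :=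
  Finset.sum_nonneg fun i _ => mul_self_nonneg (v i)

private lemma amgm_s17 (v a k : ℝ) (hv : 0 < v) (ha : 0 ≤ a) (hk : 0 ≤ k) :
    2 * Real.sqrt a * Real.sqrt k ≤ v⁻¹ * a + v * k := by
  rw [show v⁻¹ * a + v * k = (a + v^2 * k)/v by field_simp, le_div_iff₀ hv]
  nlinarith [sq_nonneg (Real.sqrt a - v * Real.sqrt k), Real.sq_sqrt ha,
    Real.sq_sqrt hk, Real.sqrt_nonneg a, Real.sqrt_nonneg k]

private lemma trace_XXt_pos {n d : ℕ} (X : Matrix (Fin n) (Fin d) ℝ) (hX : X ≠ 0) :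
    0 < (X * Xᵀ).trace := by
  have h : (X * Xᵀ).trace = ∑ i, ∑ j, X i j * X i j := by
    simp [Matrix.trace, Matrix.diag, Matrix.mul_apply]
  rw [h]
  obtain ⟨i, j, hij⟩ : ∃ i j, X i j ≠ 0 := by
    by_contra hc
    push_neg at hc
    exact hX (by ext i j; simp [hc])
  have h1 : 0 < ∑ j, X i j * X i j :=
    Finset.sum_pos' (fun k _ => mul_self_nonneg _)
      ⟨j, Finset.mem_univ j, mul_self_pos.mpr hij⟩
  exact Finset.sum_pos' (fun k _ => Finset.sum_nonneg fun l _ => mul_self_nonneg _)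
    ⟨i, Finset.mem_univ i, h1⟩

-- key lemma
private lemma key {n d : ℕ} (y : Fin n → ℝ) (hy0 : y ≠ 0)
    (X : Matrix (Fin n) (Fin d) ℝ) (hX : X ≠ 0) (β : Fin d → ℝ) :
    innerInf y X β = 2 * n / Real.sqrt (y ⬝ᵥ y) * ridgeCrit y X β := by
  classical
  have hn0 : n ≠ 0 := by
    rintro rfl; exact hy0 (funext fun i => i.elim0)
  have hn : (0:ℝ) < n := by exact_mod_cast Nat.pos_of_ne_zero hn0
  set ρ : Fin n → ℝ := y - X.mulVec β with hρdef
  set A : ℝ := ρ ⬝ᵥ ρ with hAdef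
  set B : ℝ := β ⬝ᵥ β with hBdef
  set Ay : ℝ := y ⬝ᵥ y with hAydef
  set T : ℝ := (X * Xᵀ).trace with hTdef
  have hA : 0 ≤ A := dot_self_nonneg ρ
  have hB : 0 ≤ B := dot_self_nonneg β
  have hAy : 0 < Ay := lt_of_le_of_ne (dot_self_nonneg y)
    (fun h => hy0 (dotProduct_self_eq_zero.mp h.symm))
  have hT : 0 < T := trace_XXt_pos X hX
  have sAy : 0 < Real.sqrt Ay := Real.sqrt_pos.mpr hAy
  have sn : 0 < Real.sqrt n := Real.sqrt_pos.mpr hn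
  have hsn : Real.sqrt n * Real.sqrt n = (n:ℝ) := Real.mul_self_sqrt hn.le
  have hsy : Real.sqrt Ay * Real.sqrt Ay = Ay := Real.mul_self_sqrt hAy.le
  have hmulv : ∀ (m:ℕ) (v:ℝ) (w : Fin m → ℝ),
      (v • (1:Matrix (Fin m) (Fin m) ℝ)).mulVec w = v • w := by
    intro m v w; rw [smul_mulVec, one_mulVec]
  have hdot : ∀ (m:ℕ) (v:ℝ) (w : Fin m → ℝ), v ≠ 0 →
      w ⬝ᵥ (pinvScal m v).mulVec w = v⁻¹ * (w ⬝ᵥ w) := by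
    intro m v w hv
    rw [pinvScal, if_neg hv, hmulv, dotProduct_smul]; rfl
  have hdot0 : ∀ (m:ℕ) (w : Fin m → ℝ), w ⬝ᵥ (pinvScal m 0).mulVec w = 0 := by
    intro m w; rw [pinvScal, if_pos rfl, Matrix.zero_mulVec, dotProduct_zero]
  have htr : ∀ c v : ℝ,
      (c • (X * Xᵀ) + v • (1 : Matrix (Fin n) (Fin n) ℝ)).trace = c * T + v * n := by
    intro c v
    rw [Matrix.trace_add, Matrix.trace_smul, Matrix.trace_smul, Matrix.trace_one]
    simp [smul_eq_mul, hTdef]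
  have hrange : ∀ (m:ℕ) (v:ℝ) (w : Fin m → ℝ), 0 < v →
      w ∈ Set.range (Matrix.mulVec (v • (1 : Matrix (Fin m) (Fin m) ℝ))) := by
    intro m v w hv
    exact ⟨v⁻¹ • w, by rw [hmulv, smul_smul, mul_inv_cancel₀ hv.ne', one_smul]⟩
  set t : ℝ := 2 * Real.sqrt n * Real.sqrt A / Real.sqrt Ay
      + 2 * Real.sqrt T * Real.sqrt B / Real.sqrt Ay with htdef
  -- Existence of optimal v
  have claim1 : ∃ v : ℝ, 0 ≤ v ∧
      ρ ∈ Set.range (Matrix.mulVec (v • (1 : Matrix (Fin n) (Fin n) ℝ))) ∧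
      ρ ⬝ᵥ (pinvScal n v).mulVec ρ + v * n / Ay
        = 2 * Real.sqrt n * Real.sqrt A / Real.sqrt Ay := by
    by_cases hA0 : A = 0
    · have hρ0 : ρ = 0 := dotProduct_self_eq_zero.mp hA0
      refine ⟨0, le_refl 0, ⟨0, by rw [hmulv]; simp [hρ0]⟩, ?_⟩
      rw [hdot0, hA0]
      simp
    · have hApos : 0 < A := lt_of_le_of_ne hA (Ne.symm hA0)
      have sa : 0 < Real.sqrt A := Real.sqrt_pos.mpr hApos
      have hsa : Real.sqrt A * Real.sqrt A = A := Real.mul_self_sqrt hA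
      set v := Real.sqrt A * Real.sqrt Ay / Real.sqrt n with hvdef
      have hvpos : 0 < v := div_pos (mul_pos sa sAy) sn
      refine ⟨v, hvpos.le, hrange n v ρ hvpos, ?_⟩
      rw [hdot n v ρ hvpos.ne', hvdef]
      rw [← hAdef]
      field_simp
      linear_combination (Real.sqrt Ay*Ay*A - 2*Ay*Real.sqrt Ay*(Real.sqrt A*Real.sqrt A))*hsn
        + (-(n:ℝ)*Real.sqrt Ay*Ay)*hsa + ((n:ℝ)*Real.sqrt Ay*(Real.sqrt A*Real.sqrt A))*hsy
        + (Ay*(A-2*(Real.sqrt A*Real.sqrt A))*(1-Real.sqrt Ay))*hsn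
        + ((n:ℝ)*(1-Real.sqrt Ay)*(Real.sqrt A*Real.sqrt A))*hsy - ((n:ℝ)*(1-Real.sqrt Ay)*Ay)*hsa
  have claim2 : ∃ c : ℝ, 0 ≤ c ∧
      β ∈ Set.range (Matrix.mulVec (c • (1 : Matrix (Fin d) (Fin d) ℝ))) ∧
      β ⬝ᵥ (pinvScal d c).mulVec β + c * T / Ay
        = 2 * Real.sqrt T * Real.sqrt B / Real.sqrt Ay := by
    by_cases hB0 : B = 0
    · have hβ0 : β = 0 := dotProduct_self_eq_zero.mp hB0
      refine ⟨0, le_refl 0, ⟨0, by rw [hmulv]; simp [hβ0]⟩, ?_⟩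
      rw [hdot0, hB0]
      simp
    · have hBpos : 0 < B := lt_of_le_of_ne hB (Ne.symm hB0)
      have sb : 0 < Real.sqrt B := Real.sqrt_pos.mpr hBpos
      have hsb : Real.sqrt B * Real.sqrt B = B := Real.mul_self_sqrt hB
      have st : 0 < Real.sqrt T := Real.sqrt_pos.mpr hT
      have hst : Real.sqrt T * Real.sqrt T = T := Real.mul_self_sqrt hT.le
      set c := Real.sqrt B * Real.sqrt Ay / Real.sqrt T with hcdef
      have hcpos : 0 < c := div_pos (mul_pos sb sAy) st
      refine ⟨c, hcpos.le, hrange d c β hcpos, ?_⟩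
      rw [hdot d c β hcpos.ne', hcdef]
      rw [← hBdef]
      field_simp
      linear_combination (Real.sqrt Ay*Ay*B - 2*Ay*Real.sqrt Ay*(Real.sqrt B*Real.sqrt B))*hst
        + (-T*Real.sqrt Ay*Ay)*hsb + (T*Real.sqrt Ay*(Real.sqrt B*Real.sqrt B))*hsy
        + (Ay*(B-2*(Real.sqrt B*Real.sqrt B))*(1-Real.sqrt Ay))*hst
        + (T*(1-Real.sqrt Ay)*(Real.sqrt B*Real.sqrt B))*hsy - (T*(1-Real.sqrt Ay)*Ay)*hsb
  obtain ⟨v0, hv0, hrv0, heqv⟩ := claim1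
  obtain ⟨c0, hc0, hrc0, heqc⟩ := claim2
  have hmem : t ∈ {r : ℝ | ∃ c v : ℝ, 0 ≤ c ∧ 0 ≤ v ∧
      ρ ∈ Set.range (Matrix.mulVec (v • (1 : Matrix (Fin n) (Fin n) ℝ))) ∧
      β ∈ Set.range (Matrix.mulVec (c • (1 : Matrix (Fin d) (Fin d) ℝ))) ∧
      r = ρ ⬝ᵥ (pinvScal n v).mulVec ρ + β ⬝ᵥ (pinvScal d c).mulVec β +
        (c • (X * Xᵀ) + v • (1 : Matrix (Fin n) (Fin n) ℝ)).trace / Ay} := by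
    refine ⟨c0, v0, hc0, hv0, hrv0, hrc0, ?_⟩
    rw [htr, add_div, htdef]
    linarith [heqv, heqc]
  have hlb : ∀ r ∈ {r : ℝ | ∃ c v : ℝ, 0 ≤ c ∧ 0 ≤ v ∧
      ρ ∈ Set.range (Matrix.mulVec (v • (1 : Matrix (Fin n) (Fin n) ℝ))) ∧
      β ∈ Set.range (Matrix.mulVec (c • (1 : Matrix (Fin d) (Fin d) ℝ))) ∧
      r = ρ ⬝ᵥ (pinvScal n v).mulVec ρ + β ⬝ᵥ (pinvScal d c).mulVec β +
        (c • (X * Xᵀ) + v • (1 : Matrix (Fin n) (Fin n) ℝ)).trace / Ay}, t ≤ r := by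
    rintro r ⟨c, v, hc, hv, ⟨u, hu⟩, ⟨w, hw⟩, rfl⟩
    rw [htr, add_div]
    have h1 : 2 * Real.sqrt n * Real.sqrt A / Real.sqrt Ay
        ≤ ρ ⬝ᵥ (pinvScal n v).mulVec ρ + v * n / Ay := by
      rcases eq_or_lt_of_le hv with heq | hvpos
      · have hρ0 : ρ = 0 := by rw [← hu, hmulv, ← heq, zero_smul]
        have hA0 : A = 0 := by rw [hAdef, hρ0, zero_dotProduct]
        rw [← heq, hdot0, hA0]
        simp
      · have key := amgm_s17 v A ((n:ℝ)/Ay) hvpos hA (by positivity)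
        rw [Real.sqrt_div hn.le] at key
        rw [hdot n v ρ hvpos.ne']
        calc 2 * Real.sqrt n * Real.sqrt A / Real.sqrt Ay
            = 2 * Real.sqrt A * (Real.sqrt n / Real.sqrt Ay) := by ring
          _ ≤ v⁻¹ * A + v * ((n:ℝ)/Ay) := key
          _ = v⁻¹ * A + v * n / Ay := by ring
    have h2 : 2 * Real.sqrt T * Real.sqrt B / Real.sqrt Ay
        ≤ β ⬝ᵥ (pinvScal d c).mulVec β + c * T / Ay := by
      rcases eq_or_lt_of_le hc with heq | hcpos
      · have hβ0 : β = 0 := by rw [← hw, hmulv, ← heq, zero_smul]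
        have hB0 : B = 0 := by rw [hBdef, hβ0, zero_dotProduct]
        rw [← heq, hdot0, hB0]
        simp
      · have key := amgm_s17 c B (T/Ay) hcpos hB (by positivity)
        rw [Real.sqrt_div hT.le] at key
        rw [hdot d c β hcpos.ne']
        calc 2 * Real.sqrt T * Real.sqrt B / Real.sqrt Ay
            = 2 * Real.sqrt B * (Real.sqrt T / Real.sqrt Ay) := by ring
          _ ≤ c⁻¹ * B + c * (T/Ay) := key
          _ = c⁻¹ * B + c * T / Ay := by ring
    linarith [h1, h2]
  have hinf : innerInf y X β = t :=
    le_antisymm (csInf_le ⟨t, hlb⟩ hmem) (le_csInf ⟨t, hmem⟩ hlb)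
  rw [hinf]
  have hrc : ridgeCrit y X β
      = Real.sqrt A / Real.sqrt n + Real.sqrt T / n * Real.sqrt B := by
    rw [ridgeCrit, Matrix.trace_smul, trace_mul_comm]
    rw [show (1/(n:ℝ)) • T / n = T / (n*n) by rw [smul_eq_mul]; ring]
    rw [Real.sqrt_div hA, Real.sqrt_div hT.le, Real.sqrt_mul_self hn.le]
  rw [hrc, htdef]
  field_simp
  linear_combination (2*(n:ℝ)*Real.sqrt Ay*Real.sqrt A)*hsn
    + (Real.sqrt A - 2*Real.sqrt A*(n:ℝ)*Real.sqrt Ay)*hsn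

/-- The inner infimum equals `(2n/‖y‖₂)(√(MSPE(β)) + λ‖β‖₂)` with the tuned
`λ = √(tr(Ĉ)/n)`; consequently minimizing it over `β` is equivalent to minimizing
the square-root ridge regression criterion. -/
theorem stmt17 {n d : ℕ} (y : Fin n → ℝ) (hy0 : y ≠ 0)
    (X : Matrix (Fin n) (Fin d) ℝ) (hX : X ≠ 0) :
    (∀ β : Fin d → ℝ,
      innerInf y X β = 2 * n / Real.sqrt (y ⬝ᵥ y) * ridgeCrit y X β) ∧
    (∀ β : Fin d → ℝ,
      (∀ γ : Fin d → ℝ, innerInf y X β ≤ innerInf y X γ) ↔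
        (∀ γ : Fin d → ℝ, ridgeCrit y X β ≤ ridgeCrit y X γ)) := by
  have hkey := fun β => key y hy0 X hX β
  refine ⟨hkey, fun β => ?_⟩
  have hn0 : n ≠ 0 := by rintro rfl; exact hy0 (funext fun i => i.elim0)
  have hAy : 0 < y ⬝ᵥ y := lt_of_le_of_ne (dot_self_nonneg y)
    (fun h => hy0 (dotProduct_self_eq_zero.mp h.symm))
  have hpos : 0 < 2 * (n:ℝ) / Real.sqrt (y ⬝ᵥ y) := by
    have hn : (0:ℝ) < n := by exact_mod_cast Nat.pos_of_ne_zero hn0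
    positivity
  constructor
  · intro h γ
    have h2 := h γ
    rw [hkey β, hkey γ] at h2
    exact le_of_mul_le_mul_left h2 hpos
  · intro h γ
    rw [hkey β, hkey γ]
    exact mul_le_mul_of_nonneg_left (h γ) hpos.le
end
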